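/- arXiv:2203.12007 — 4 statements merged into one kernel-verified Lean document; each statement's English description precedes it below -/
import Mathlib

section
/- Let A ∈ ℝ^{n×n}, B ∈ ℝ^{n×m}, t > 0, x₀ ∈ ℝⁿ, and let U be а set-valued map assigning to each s ∈ [0,t] a nonempty compact subset U(s) ⊆ ℝᵐ, continuous in the Hausdorff metric. Define the reach set X_t := { exp(tA)x₀ + ∫₀ᵗ exp(sA) B u(s) ds : u : [0,t] → ℝᵐ Lebesgue-measurable with u(s) ∈ U(s) for all s ∈ [0,t] }. Then for every y ∈ ℝⁿ, sup_{x ∈ X_t} ⟨y, x⟩ = ⟨y, exp(tA)x₀⟩ + ∫₀ᵗ h_{U(s)}((exp(sA)B)ᵀ y) ds, where h_{U(s)}(v) := sup_{u ∈ U(s)} ⟨v, u⟩. -/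
noncomputable section
open Matrix MeasureTheory TopologicalSpace Filter
open scoped ENNReal Pointwise

/-- The `r × r` nilpotent upper-shift matrix `N` with `N_{a,a+1} = 1`. -/
def shiftMat (r : ℕ) : Matrix (Fin r) (Fin r) ℝ :=
  fun a b => if (b : ℕ) = (a : ℕ) + 1 then 1 else 0

/-- `ξ(s) = (s^{r-1}/(r-1)!, …, s, 1)ᵀ ∈ ℝ^r`. -/
def xi (r : ℕ) (s : ℝ) : Fin r → ℝ :=
  fun a => s ^ (r - 1 - (a : ℕ)) / (Nat.factorial (r - 1 - (a : ℕ)))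

/-- Support function `h_K(y) = sup_{x ∈ K} ⟨y, x⟩` of a set `K`. -/
def sptFn {ι : Type*} [Fintype ι] (K : Set (ι → ℝ)) (y : ι → ℝ) : ℝ :=
  sSup ((fun x => y ⬝ᵥ x) '' K)

/-- The Euclidean (2-)norm on `ι → ℝ`. -/
def euclNorm {ι : Type*} [Fintype ι] (y : ι → ℝ) : ℝ :=
  Real.sqrt (∑ i, y i ^ 2)

/-- The `p`-norm on `ℝ^m`, `p ∈ [1,∞]`. -/
def pnorm (p : ℝ≥0∞) [Fact (1 ≤ p)] {m : ℕ} (u : Fin m → ℝ) : ℝ :=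
  ‖(WithLp.equiv p (Fin m → ℝ)).symm u‖

/-- The (forward) reach set at time `t` of `ẋ = Ax + Bu`, from initial condition
`x₀`, over measurable inputs selected from the set-valued uncertainty `U`. -/
def reachSet {N M : Type*} [Fintype N] [DecidableEq N] [Fintype M]
    (A : Matrix N N ℝ) (B : Matrix N M ℝ) (x0 : N → ℝ) (t : ℝ)
    (U : ℝ → Set (M → ℝ)) : Set (N → ℝ) :=
  {x | ∃ u : ℝ → M → ℝ, Measurable u ∧ (∀ s ∈ Set.Icc 0 t, u s ∈ U s) ∧
    x = NormedSpace.exp (t • A) *ᵥ x0 +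
      ∫ s in (0:ℝ)..t, NormedSpace.exp (s • A) *ᵥ (B *ᵥ u s)}

/-- Block-diagonal integrator state matrix `A = blockdiag(A_1,…,A_m)`. -/
def blkA {m : ℕ} (r : Fin m → ℕ) : Matrix (Σ j, Fin (r j)) (Σ j, Fin (r j)) ℝ :=
  fun p q => if p.1 = q.1 ∧ (q.2 : ℕ) = (p.2 : ℕ) + 1 then 1 else 0

/-- Block-diagonal integrator input matrix `B = blockdiag(b_1,…,b_m)`, `b_j = e_{r_j}`. -/
def blkB {m : ℕ} (r : Fin m → ℕ) : Matrix (Σ j, Fin (r j)) (Fin m) ℝ :=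
  fun p k => if p.1 = k ∧ (p.2 : ℕ) = r p.1 - 1 then 1 else 0

/-- Single-input integrator reach set with scalar input confined to `[α(s), β(s)]`. -/
def reachSet1 {r : ℕ} (x0 : Fin r → ℝ) (t : ℝ) (α β : ℝ → ℝ) : Set (Fin r → ℝ) :=
  {x | ∃ u : ℝ → ℝ, Measurable u ∧ (∀ s ∈ Set.Icc 0 t, u s ∈ Set.Icc (α s) (β s)) ∧
    x = NormedSpace.exp (t • shiftMat r) *ᵥ x0 + ∫ s in (0:ℝ)..t, u s • xi r s}

open Metric
open scoped Topology
section Aux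


/-- least index satisfying `P`, or `0`. -/
noncomputable def krnIdx (P : ℕ → Prop) : ℕ := by
  classical exact if h : ∃ k, P k then Nat.find h else 0

theorem krnIdx_spec {P : ℕ → Prop} (h : ∃ k, P k) : P (krnIdx P) := by
  classical
  rw [krnIdx]
  simp only [h, dif_pos]
  convert Nat.find_spec h

theorem measurable_krnIdx {p : ℝ → ℕ → Prop} (hp : ∀ k, MeasurableSet {s | p s k}) :
    Measurable fun s => krnIdx (p s) := by
  classical
  apply measurable_to_countable'
  intro k
  have : (fun s => krnIdx (p s)) ⁻¹' {k} =
      ({s | p s k} ∩ ⋂ j ∈ Finset.range k, {s | p s j}ᶜ) ∪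
        ({s : ℝ | k = 0} ∩ ⋂ j, {s | p s j}ᶜ) := by
    ext s
    simp only [Set.mem_preimage, Set.mem_singleton_iff, Set.mem_union, Set.mem_inter_iff,
      Set.mem_iInter, Finset.mem_range, Set.mem_compl_iff, Set.mem_setOf_eq]
    unfold krnIdx
    split_ifs with h
    · rw [Nat.find_eq_iff]
      constructor
      · rintro ⟨h1, h2⟩; exact Or.inl ⟨h1, fun j hj => h2 j hj⟩
      · rintro (⟨h1, h2⟩ | ⟨-, h2⟩)
        · exact ⟨h1, fun j hj => h2 j hj⟩
        · exact absurd h (by simpa using h2)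
    · push_neg at h
      constructor
      · rintro rfl; exact Or.inr ⟨rfl, fun j => h j⟩
      · rintro (⟨h1, -⟩ | ⟨rfl, -⟩)
        · exact absurd h1 (h k)
        · rfl
  rw [this]
  exact ((hp k).inter (MeasurableSet.biInter (Set.to_countable _)
      (fun j _ => (hp j).compl))).union
    ((MeasurableSet.const _).inter (MeasurableSet.iInter fun j => (hp j).compl))

variable {m : ℕ}

/-- the dense sequence in `ℝ^m` -/
noncomputable def krnQ (m : ℕ) : ℕ → (Fin m → ℝ) := TopologicalSpace.denseSeq _

/-- KRN approximating sequence. -/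
noncomputable def krnSeq (S : ℝ → Set (Fin m → ℝ)) : ℕ → ℝ → Fin m → ℝ
  | 0 => fun s => krnQ m (krnIdx fun k => (S s ∩ closedBall (krnQ m k) 1).Nonempty)
  | (n + 1) => fun s =>
      krnQ m (krnIdx fun k =>
        (S s ∩ closedBall (krnQ m k) ((2 : ℝ)⁻¹ ^ (n + 1))).Nonempty ∧
          dist (krnQ m k) (krnSeq S n s) ≤ (2 : ℝ)⁻¹ ^ (n + 1) + (2 : ℝ)⁻¹ ^ n)


theorem exists_meas_selection (S : ℝ → Set (Fin m → ℝ))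
    (hne : ∀ s, (S s).Nonempty) (hcl : ∀ s, IsClosed (S s))
    (hm : ∀ (q : Fin m → ℝ) (r : ℝ), MeasurableSet {s | (S s ∩ closedBall q r).Nonempty}) :
    ∃ u : ℝ → Fin m → ℝ, Measurable u ∧ ∀ s, u s ∈ S s := by
  classical
  have hq : DenseRange (krnQ m) := TopologicalSpace.denseRange_denseSeq _
  -- invariant
  have inv : ∀ n s, (S s ∩ closedBall (krnSeq S n s) ((2 : ℝ)⁻¹ ^ n)).Nonempty := by
    intro n
    induction n with
    | zero =>
      intro s
      obtain ⟨x, hx⟩ := hne s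
      obtain ⟨k, hk⟩ := hq.exists_dist_lt x (one_pos)
      have hex : ∃ k, (S s ∩ closedBall (krnQ m k) 1).Nonempty :=
        ⟨k, x, hx, mem_closedBall.2 hk.le⟩
      obtain ⟨x', hx'S, hx'B⟩ := krnIdx_spec hex
      exact ⟨x', hx'S, by simpa [krnSeq] using hx'B⟩
    | succ n ih =>
      intro s
      obtain ⟨x, hxS, hxB⟩ := ih s
      obtain ⟨k, hk⟩ := hq.exists_dist_lt x (by positivity : (0:ℝ) < (2:ℝ)⁻¹ ^ (n+1))
      have hex : ∃ k, (S s ∩ closedBall (krnQ m k) ((2 : ℝ)⁻¹ ^ (n + 1))).Nonempty ∧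
          dist (krnQ m k) (krnSeq S n s) ≤ (2 : ℝ)⁻¹ ^ (n + 1) + (2 : ℝ)⁻¹ ^ n := by
        refine ⟨k, ⟨x, hxS, mem_closedBall.2 hk.le⟩, ?_⟩
        calc dist (krnQ m k) (krnSeq S n s) ≤ dist (krnQ m k) x + dist x (krnSeq S n s) :=
              dist_triangle _ _ _
          _ ≤ (2 : ℝ)⁻¹ ^ (n + 1) + (2 : ℝ)⁻¹ ^ n := by
              exact add_le_add (by rw [dist_comm]; exact hk.le) (mem_closedBall.1 hxB)
      obtain ⟨⟨x', hx'S, hx'B⟩, -⟩ := krnIdx_spec hex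
      exact ⟨x', hx'S, by simpa [krnSeq] using hx'B⟩
  -- successive distances
  have hdist : ∀ n s, dist (krnSeq S n s) (krnSeq S (n + 1) s) ≤ 2 * (2 : ℝ)⁻¹ ^ n := by
    intro n s
    obtain ⟨x, hxS, hxB⟩ := inv n s
    obtain ⟨k, hk⟩ := hq.exists_dist_lt x (by positivity : (0:ℝ) < (2:ℝ)⁻¹ ^ (n+1))
    have hex : ∃ k, (S s ∩ closedBall (krnQ m k) ((2 : ℝ)⁻¹ ^ (n + 1))).Nonempty ∧
        dist (krnQ m k) (krnSeq S n s) ≤ (2 : ℝ)⁻¹ ^ (n + 1) + (2 : ℝ)⁻¹ ^ n := by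
      refine ⟨k, ⟨x, hxS, mem_closedBall.2 hk.le⟩, ?_⟩
      calc dist (krnQ m k) (krnSeq S n s) ≤ dist (krnQ m k) x + dist x (krnSeq S n s) :=
            dist_triangle _ _ _
        _ ≤ (2 : ℝ)⁻¹ ^ (n + 1) + (2 : ℝ)⁻¹ ^ n := by
            exact add_le_add (by rw [dist_comm]; exact hk.le) (mem_closedBall.1 hxB)
    obtain ⟨-, hd⟩ := krnIdx_spec hex
    have : dist (krnSeq S (n + 1) s) (krnSeq S n s) ≤ (2 : ℝ)⁻¹ ^ (n + 1) + (2 : ℝ)⁻¹ ^ n := by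
      simpa [krnSeq] using hd
    rw [dist_comm]
    refine this.trans ?_
    have h1 : (2 : ℝ)⁻¹ ^ (n + 1) ≤ (2 : ℝ)⁻¹ ^ n :=
      pow_le_pow_of_le_one (by norm_num) (by norm_num) (Nat.le_succ n)
    linarith
  -- measurability
  have hmeas : ∀ n, Measurable (krnSeq S n) := by
    intro n
    induction n with
    | zero =>
      exact measurable_from_nat.comp (measurable_krnIdx fun k => hm _ _)
    | succ n ih =>
      refine measurable_from_nat.comp (measurable_krnIdx fun k => ?_)
      have h1 : MeasurableSet {s | (S s ∩ closedBall (krnQ m k) ((2 : ℝ)⁻¹ ^ (n + 1))).Nonempty} :=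
        hm _ _
      have h2 : MeasurableSet {s | dist (krnQ m k) (krnSeq S n s) ≤
          (2 : ℝ)⁻¹ ^ (n + 1) + (2 : ℝ)⁻¹ ^ n} := by
        have : {s | dist (krnQ m k) (krnSeq S n s) ≤ (2 : ℝ)⁻¹ ^ (n + 1) + (2 : ℝ)⁻¹ ^ n} =
            krnSeq S n ⁻¹' closedBall (krnQ m k) ((2 : ℝ)⁻¹ ^ (n + 1) + (2 : ℝ)⁻¹ ^ n) := by
          ext s; simp [mem_closedBall, dist_comm]
        rw [this]
        exact ih measurableSet_closedBall
      exact h1.inter h2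
  -- Cauchy and limit
  have hcau : ∀ s, CauchySeq fun n => krnSeq S n s := by
    intro s
    apply cauchySeq_of_le_geometric (2 : ℝ)⁻¹ 2 (by norm_num)
    intro n
    simpa using hdist n s
  have hlim : ∀ s, ∃ l, Tendsto (fun n => krnSeq S n s) atTop (𝓝 l) :=
    fun s => cauchySeq_tendsto_of_complete (hcau s)
  choose u hu using hlim
  refine ⟨u, ?_, ?_⟩
  · exact measurable_of_tendsto_metrizable hmeas (tendsto_pi_nhds.2 hu)
  · intro s
    -- pick witnesses x n ∈ S s with dist (x n) (krnSeq S n s) ≤ 2⁻¹ ^ n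
    choose x hxS hxB using fun n => inv n s
    have hx_tendsto : Tendsto x atTop (𝓝 (u s)) := by
      rw [tendsto_iff_dist_tendsto_zero]
      have hb : ∀ n, dist (x n) (u s) ≤ (2 : ℝ)⁻¹ ^ n + dist (krnSeq S n s) (u s) := by
        intro n
        calc dist (x n) (u s) ≤ dist (x n) (krnSeq S n s) + dist (krnSeq S n s) (u s) :=
              dist_triangle _ _ _
          _ ≤ (2 : ℝ)⁻¹ ^ n + dist (krnSeq S n s) (u s) :=
              add_le_add (mem_closedBall.1 (hxB n)) le_rfl
      have : Tendsto (fun n => (2 : ℝ)⁻¹ ^ n + dist (krnSeq S n s) (u s)) atTop (𝓝 0) := by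
        have h1 : Tendsto (fun n => ((2 : ℝ)⁻¹) ^ n) atTop (𝓝 0) :=
          tendsto_pow_atTop_nhds_zero_of_lt_one (by norm_num) (by norm_num)
        have h2 : Tendsto (fun n => dist (krnSeq S n s) (u s)) atTop (𝓝 0) :=
          tendsto_iff_dist_tendsto_zero.1 (hu s)
        simpa using h1.add h2
      exact squeeze_zero (fun n => dist_nonneg) hb this
    exact (hcl s).mem_of_tendsto hx_tendsto (Filter.Eventually.of_forall hxS)


theorem continuous_dotProduct_right {m : ℕ} (y : Fin m → ℝ) :
    Continuous fun v : Fin m → ℝ => y ⬝ᵥ v := by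
  unfold dotProduct
  exact continuous_finset_sum _ fun i _ => continuous_const.mul (continuous_apply i)

theorem sptFn_isGreatest {m : ℕ} (K : Set (Fin m → ℝ)) (hK : IsCompact K) (hne : K.Nonempty)
    (y : Fin m → ℝ) : ∃ v ∈ K, y ⬝ᵥ v = sptFn K y ∧ IsGreatest ((fun x => y ⬝ᵥ x) '' K) (y ⬝ᵥ v) := by
  obtain ⟨v, hv, hmax⟩ := hK.exists_isMaxOn hne (continuous_dotProduct_right y).continuousOn
  have hg : IsGreatest ((fun x => y ⬝ᵥ x) '' K) (y ⬝ᵥ v) :=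
    ⟨⟨v, hv, rfl⟩, by rintro _ ⟨w, hw, rfl⟩; exact hmax hw⟩
  exact ⟨v, hv, hg.csSup_eq.symm, hg⟩

theorem dotProduct_le_sptFn {m : ℕ} {K : Set (Fin m → ℝ)} (hK : IsCompact K)
    {y v : Fin m → ℝ} (hv : v ∈ K) : y ⬝ᵥ v ≤ sptFn K y :=
  le_csSup ((hK.image (continuous_dotProduct_right y)).bddAbove) ⟨v, hv, rfl⟩

theorem sptFn_sub_le {m : ℕ} (K L : Set (Fin m → ℝ)) (hK : IsCompact K) (hL : IsCompact L)
    (hKne : K.Nonempty) (hLne : L.Nonempty) (y y' : Fin m → ℝ) (R : ℝ)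
    (hR : ∀ x ∈ L, ‖x‖ ≤ R) :
    sptFn K y - sptFn L y' ≤
      (∑ i, |y i|) * hausdorffDist K L + (∑ i, |y i - y' i|) * R := by
  rw [sub_le_iff_le_add]
  apply csSup_le (hKne.image _)
  rintro _ ⟨x, hx, rfl⟩
  obtain ⟨x', hx', hdx⟩ := hL.exists_infDist_eq_dist hLne x
  have hdxle : dist x x' ≤ hausdorffDist K L := by
    rw [← hdx]
    exact infDist_le_hausdorffDist_of_mem hx
      (hausdorffEdist_ne_top_of_nonempty_of_bounded hKne hLne hK.isBounded hL.isBounded)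
  have key : y ⬝ᵥ x - y' ⬝ᵥ x' ≤
      (∑ i, |y i|) * hausdorffDist K L + (∑ i, |y i - y' i|) * R := by
    have : y ⬝ᵥ x - y' ⬝ᵥ x' = ∑ i, (y i * (x i - x' i) + (y i - y' i) * x' i) := by
      unfold dotProduct
      rw [← Finset.sum_sub_distrib]
      congr 1; ext i; ring
    rw [this]
    calc ∑ i, (y i * (x i - x' i) + (y i - y' i) * x' i)
        ≤ ∑ i, (|y i| * hausdorffDist K L + |y i - y' i| * R) := by
          apply Finset.sum_le_sum
          intro i _
          have h1 : y i * (x i - x' i) ≤ |y i| * hausdorffDist K L := by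
            calc y i * (x i - x' i) ≤ |y i * (x i - x' i)| := le_abs_self _
              _ = |y i| * |x i - x' i| := abs_mul _ _
              _ ≤ |y i| * hausdorffDist K L := by
                  apply mul_le_mul_of_nonneg_left _ (abs_nonneg _)
                  calc |x i - x' i| = dist (x i) (x' i) := (Real.dist_eq _ _).symm
                    _ ≤ dist x x' := dist_le_pi_dist x x' i
                    _ ≤ hausdorffDist K L := hdxle
          have h2 : (y i - y' i) * x' i ≤ |y i - y' i| * R := by
            calc (y i - y' i) * x' i ≤ |(y i - y' i) * x' i| := le_abs_self _
              _ = |y i - y' i| * |x' i| := abs_mul _ _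
              _ ≤ |y i - y' i| * R := by
                  apply mul_le_mul_of_nonneg_left _ (abs_nonneg _)
                  calc |x' i| = ‖x' i‖ := rfl
                    _ ≤ ‖x'‖ := norm_le_pi_norm x' i
                    _ ≤ R := hR x' hx'
          exact add_le_add h1 h2
      _ = (∑ i, |y i|) * hausdorffDist K L + (∑ i, |y i - y' i|) * R := by
          rw [Finset.sum_add_distrib, ← Finset.sum_mul, ← Finset.sum_mul]
  have hle : y' ⬝ᵥ x' ≤ sptFn L y' := dotProduct_le_sptFn hL hx'
  linarith

end Aux

set_option maxHeartbeats 1000000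

/-- the support function of the reach set of `ẋ = Ax + Bu` equals
`⟨y, exp(tA)x₀⟩ + ∫₀ᵗ h_{U(s)}((exp(sA)B)ᵀ y) ds`. -/
theorem sptFn_reachSet (n m : ℕ) (A : Matrix (Fin n) (Fin n) ℝ)
    (B : Matrix (Fin n) (Fin m) ℝ) (t : ℝ) (ht : 0 < t) (x0 : Fin n → ℝ)
    (U : ℝ → NonemptyCompacts (Fin m → ℝ)) (hU : ContinuousOn U (Set.Icc 0 t))
    (y : Fin n → ℝ) :
    sptFn (reachSet A B x0 t (fun s => (U s : Set (Fin m → ℝ)))) y =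
      y ⬝ᵥ (NormedSpace.exp (t • A) *ᵥ x0) +
        ∫ s in (0:ℝ)..t,
          sptFn (U s : Set (Fin m → ℝ)) ((NormedSpace.exp (s • A) * B)ᵀ *ᵥ y) := by
  classical
  have ht0 : (0:ℝ) ≤ t := ht.le
  -- clamp to [0,t]
  set c : ℝ → ℝ := fun s => max 0 (min s t) with hc_def
  have hc_cont : Continuous c := continuous_const.max (continuous_id.min continuous_const)
  have hc_mem : ∀ s, c s ∈ Set.Icc 0 t :=
    fun s => ⟨le_max_left _ _, max_le ht0 (min_le_right _ _)⟩
  have hc_eq : ∀ s ∈ Set.Icc 0 t, c s = s := by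
    intro s hs
    simp only [hc_def]
    rw [min_eq_left hs.2, max_eq_right hs.1]
  set V : ℝ → NonemptyCompacts (Fin m → ℝ) := fun s => U (c s) with hV_def
  have hV : Continuous V := hU.comp_continuous hc_cont hc_mem
  have hVU : ∀ s ∈ Set.Icc 0 t, (V s : Set (Fin m → ℝ)) = (U s : Set (Fin m → ℝ)) := by
    intro s hs; simp only [hV_def, hc_eq s hs]
  -- matrix exponential continuity
  have hexp : Continuous (fun s : ℝ => NormedSpace.exp (s • A)) := by
    letI : NormedRing (Matrix (Fin n) (Fin n) ℝ) := Matrix.linftyOpNormedRing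
    letI : NormedAlgebra ℝ (Matrix (Fin n) (Fin n) ℝ) := Matrix.linftyOpNormedAlgebra
    letI : NormedAlgebra ℚ (Matrix (Fin n) (Fin n) ℝ) := Matrix.linftyOpNormedAlgebra
    exact NormedSpace.exp_continuous.comp (continuous_id.smul continuous_const)
  set Φ : ℝ → Matrix (Fin n) (Fin m) ℝ := fun s => NormedSpace.exp (s • A) * B with hΦ_def
  have hΦ : Continuous Φ := hexp.matrix_mul continuous_const
  set f : ℝ → Fin m → ℝ := fun s => (Φ s)ᵀ *ᵥ y with hf_def
  have hf : Continuous f := hΦ.matrix_transpose.matrix_mulVec continuous_const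
  set fc : ℝ → Fin m → ℝ := fun s => f (c s) with hfc_def
  have hfc : Continuous fc := hf.comp hc_cont
  set g : ℝ → ℝ := fun s => sptFn (V s : Set (Fin m → ℝ)) (fc s) with hg_def
  -- uniform bound on V
  obtain ⟨r0, hr0⟩ := (V 0).isCompact.isBounded.subset_closedBall 0
  have hDcont : ContinuousOn (fun s => dist (U s) (V 0)) (Set.Icc 0 t) :=
    continuous_dist.comp_continuousOn (hU.prodMk continuousOn_const)
  obtain ⟨s₁, hs₁, hmax₁⟩ := isCompact_Icc.exists_isMaxOn (Set.nonempty_Icc.2 ht0) hDcont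
  set R : ℝ := |dist (U s₁) (V 0)| + |r0| with hR_def
  have hR0 : 0 ≤ R := add_nonneg (abs_nonneg _) (abs_nonneg _)
  have hRB : ∀ s, ∀ v ∈ (V s : Set (Fin m → ℝ)), ‖v‖ ≤ R := by
    intro s v hv
    obtain ⟨w, hw, hdw⟩ := (V 0).isCompact.exists_infDist_eq_dist (V 0).nonempty v
    have h1 : infDist v (V 0 : Set (Fin m → ℝ)) ≤ dist (U s₁) (V 0) := by
      have hne_top : EMetric.hausdorffEdist (V s : Set (Fin m → ℝ)) (V 0 : Set (Fin m → ℝ)) ≠ ⊤ :=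
        hausdorffEdist_ne_top_of_nonempty_of_bounded (V s).nonempty (V 0).nonempty
          (V s).isCompact.isBounded (V 0).isCompact.isBounded
      calc infDist v (V 0 : Set (Fin m → ℝ))
          ≤ hausdorffDist (V s : Set (Fin m → ℝ)) (V 0 : Set (Fin m → ℝ)) :=
            infDist_le_hausdorffDist_of_mem hv hne_top
        _ = dist (V s) (V 0) := NonemptyCompacts.dist_eq.symm
        _ = dist (U (c s)) (V 0) := rfl
        _ ≤ dist (U s₁) (V 0) := hmax₁ (hc_mem s)
    calc ‖v‖ = dist v 0 := (dist_zero_right v).symm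
      _ ≤ dist v w + dist w 0 := dist_triangle _ _ _
      _ ≤ |dist (U s₁) (V 0)| + |r0| := by
          apply add_le_add
          · exact (hdw ▸ h1).trans (le_abs_self _)
          · exact (mem_closedBall.1 (hr0 hw)).trans (le_abs_self _)
  -- continuity of g
  have hg_cont : Continuous g := by
    rw [continuous_iff_continuousAt]
    intro s₀
    have key : ∀ s, dist (g s) (g s₀) ≤
        (∑ i, |fc s i| + ∑ i, |fc s₀ i|) * dist (V s) (V s₀) +
          (∑ i, |fc s i - fc s₀ i|) * R + (∑ i, |fc s₀ i - fc s i|) * R := by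
      intro s
      have hd0 : (0:ℝ) ≤ dist (V s) (V s₀) := dist_nonneg
      have hs1 : (0:ℝ) ≤ ∑ i, |fc s i| := Finset.sum_nonneg fun i _ => abs_nonneg _
      have hs2 : (0:ℝ) ≤ ∑ i, |fc s₀ i| := Finset.sum_nonneg fun i _ => abs_nonneg _
      have hs3 : (0:ℝ) ≤ ∑ i, |fc s i - fc s₀ i| := Finset.sum_nonneg fun i _ => abs_nonneg _
      have hs4 : (0:ℝ) ≤ ∑ i, |fc s₀ i - fc s i| := Finset.sum_nonneg fun i _ => abs_nonneg _
      have e1 : g s - g s₀ ≤ (∑ i, |fc s i|) * dist (V s) (V s₀) +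
          (∑ i, |fc s i - fc s₀ i|) * R := by
        have := sptFn_sub_le (V s : Set (Fin m → ℝ)) (V s₀ : Set (Fin m → ℝ))
          (V s).isCompact (V s₀).isCompact (V s).nonempty (V s₀).nonempty
          (fc s) (fc s₀) R (fun x hx => hRB s₀ x hx)
        rwa [← NonemptyCompacts.dist_eq] at this
      have e2 : g s₀ - g s ≤ (∑ i, |fc s₀ i|) * dist (V s) (V s₀) +
          (∑ i, |fc s₀ i - fc s i|) * R := by
        have := sptFn_sub_le (V s₀ : Set (Fin m → ℝ)) (V s : Set (Fin m → ℝ))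
          (V s₀).isCompact (V s).isCompact (V s₀).nonempty (V s).nonempty
          (fc s₀) (fc s) R (fun x hx => hRB s x hx)
        rw [← NonemptyCompacts.dist_eq, dist_comm (V s₀) (V s)] at this
        exact this
      rw [Real.dist_eq, abs_sub_le_iff]
      constructor <;> nlinarith [mul_nonneg hs1 hd0, mul_nonneg hs2 hd0,
        mul_nonneg hs3 hR0, mul_nonneg hs4 hR0]
    have hEcont : Tendsto (fun s =>
        (∑ i, |fc s i| + ∑ i, |fc s₀ i|) * dist (V s) (V s₀) +
          (∑ i, |fc s i - fc s₀ i|) * R + (∑ i, |fc s₀ i - fc s i|) * R) (𝓝 s₀) (𝓝 0) := by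
      have hc1 : Continuous fun s => ∑ i, |fc s i| :=
        continuous_finset_sum _ fun i _ => ((continuous_apply i).comp hfc).abs
      have hc3 : Continuous fun s => ∑ i, |fc s i - fc s₀ i| :=
        continuous_finset_sum _ fun i _ =>
          (((continuous_apply i).comp hfc).sub continuous_const).abs
      have hc4 : Continuous fun s => ∑ i, |fc s₀ i - fc s i| :=
        continuous_finset_sum _ fun i _ =>
          (continuous_const.sub ((continuous_apply i).comp hfc)).abs
      have hcont : Continuous fun s =>
          (∑ i, |fc s i| + ∑ i, |fc s₀ i|) * dist (V s) (V s₀) +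
            (∑ i, |fc s i - fc s₀ i|) * R + (∑ i, |fc s₀ i - fc s i|) * R :=
        (((hc1.add continuous_const).mul (hV.dist continuous_const)).add
          (hc3.mul continuous_const)).add (hc4.mul continuous_const)
      have := hcont.tendsto s₀
      simpa using this
    have : Tendsto (fun s => dist (g s) (g s₀)) (𝓝 s₀) (𝓝 0) :=
      squeeze_zero (fun s => dist_nonneg) key hEcont
    exact tendsto_iff_dist_tendsto_zero.2 this
  -- the argmax multifunction and its selection
  set Sm : ℝ → Set (Fin m → ℝ) :=
    fun s => {v ∈ (V s : Set (Fin m → ℝ)) | fc s ⬝ᵥ v = g s} with hSm_def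
  have hSm_ne : ∀ s, (Sm s).Nonempty := by
    intro s
    obtain ⟨v, hv, hveq, -⟩ := sptFn_isGreatest (V s : Set (Fin m → ℝ))
      (V s).isCompact (V s).nonempty (fc s)
    exact ⟨v, hv, hveq⟩
  have hSm_cl : ∀ s, IsClosed (Sm s) := by
    intro s
    have : Sm s = (V s : Set (Fin m → ℝ)) ∩ {v | fc s ⬝ᵥ v = g s} := rfl
    rw [this]
    exact (V s).isCompact.isClosed.inter
      (isClosed_eq (continuous_dotProduct_right (fc s)) continuous_const)
  have hSm_meas : ∀ (q : Fin m → ℝ) (r : ℝ),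
      MeasurableSet {s | (Sm s ∩ closedBall q r).Nonempty} := by
    intro q r
    by_cases hr : 0 ≤ r
    · apply IsClosed.measurableSet
      apply IsSeqClosed.isClosed
      intro sn s hsn hlim
      choose v hvS hvB using hsn
      obtain ⟨vl, hvlB, ψ, hψ, hconv⟩ :=
        (isCompact_closedBall q r).tendsto_subseq (fun k => hvB k)
      have hsψ : Tendsto (fun k => sn (ψ k)) atTop (𝓝 s) := hlim.comp hψ.tendsto_atTop
      -- vl ∈ V s
      have hvl_mem : vl ∈ (V s : Set (Fin m → ℝ)) := by
        have h1 : Tendsto (fun k => infDist (v (ψ k)) (V s : Set (Fin m → ℝ))) atTop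
            (𝓝 (infDist vl (V s : Set (Fin m → ℝ)))) :=
          ((continuous_infDist_pt _).tendsto vl).comp hconv
        have h2 : Tendsto (fun k => dist (V (sn (ψ k))) (V s)) atTop (𝓝 0) := by
          have := tendsto_iff_dist_tendsto_zero.1 ((hV.tendsto s).comp hsψ)
          exact this
        have hle : ∀ k, infDist (v (ψ k)) (V s : Set (Fin m → ℝ)) ≤
            dist (V (sn (ψ k))) (V s) := by
          intro k
          have hne_top : EMetric.hausdorffEdist
              (V (sn (ψ k)) : Set (Fin m → ℝ)) (V s : Set (Fin m → ℝ)) ≠ ⊤ :=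
            hausdorffEdist_ne_top_of_nonempty_of_bounded (V _).nonempty (V s).nonempty
              (V _).isCompact.isBounded (V s).isCompact.isBounded
          rw [NonemptyCompacts.dist_eq]
          exact infDist_le_hausdorffDist_of_mem (hvS (ψ k)).1 hne_top
        have : infDist vl (V s : Set (Fin m → ℝ)) ≤ 0 :=
          le_of_tendsto_of_tendsto h1 h2 (Filter.Eventually.of_forall hle)
        have hz : infDist vl (V s : Set (Fin m → ℝ)) = 0 :=
          le_antisymm this infDist_nonneg
        exact ((V s).isCompact.isClosed.mem_iff_infDist_zero (V s).nonempty).2 hz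
      -- fc s ⬝ᵥ vl = g s
      have hdot : fc s ⬝ᵥ vl = g s := by
        have hdc : Continuous (fun p : (Fin m → ℝ) × (Fin m → ℝ) => p.1 ⬝ᵥ p.2) := by
          unfold dotProduct
          exact continuous_finset_sum _ fun i _ =>
            ((continuous_apply i).comp continuous_fst).mul
              ((continuous_apply i).comp continuous_snd)
        have h1 : Tendsto (fun k => fc (sn (ψ k)) ⬝ᵥ v (ψ k)) atTop (𝓝 (fc s ⬝ᵥ vl)) := by
          have hp : Tendsto (fun k => (fc (sn (ψ k)), v (ψ k))) atTop (𝓝 (fc s, vl)) :=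
            ((hfc.tendsto s).comp hsψ).prodMk_nhds hconv
          exact (hdc.tendsto _).comp hp
        have h2 : Tendsto (fun k => fc (sn (ψ k)) ⬝ᵥ v (ψ k)) atTop (𝓝 (g s)) := by
          have : ∀ k, fc (sn (ψ k)) ⬝ᵥ v (ψ k) = g (sn (ψ k)) := fun k => (hvS (ψ k)).2
          rw [funext this]
          exact (hg_cont.tendsto s).comp hsψ
        exact tendsto_nhds_unique h1 h2
      exact ⟨vl, ⟨hvl_mem, hdot⟩, hvlB⟩
    · push_neg at hr
      have : {s | (Sm s ∩ closedBall q r).Nonempty} = ∅ := by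
        ext s
        simp [closedBall_eq_empty.2 hr]
      rw [this]; exact MeasurableSet.empty
  obtain ⟨u, hu_meas, hu_mem⟩ := exists_meas_selection Sm hSm_ne hSm_cl hSm_meas
  have hu_inU : ∀ s ∈ Set.Icc 0 t, u s ∈ (U s : Set (Fin m → ℝ)) := by
    intro s hs
    have := (hu_mem s).1
    rwa [hVU s hs] at this
  -- entrywise bound for Φ on [0,t]
  have hβcont : ContinuousOn (fun s => ∑ i, ∑ j, |Φ s i j|) (Set.Icc 0 t) :=
    (continuous_finset_sum _ fun i _ => continuous_finset_sum _ fun j _ =>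
      (hΦ.matrix_elem i j).abs).continuousOn
  obtain ⟨s₂, hs₂, hmax₂⟩ := isCompact_Icc.exists_isMaxOn (Set.nonempty_Icc.2 ht0) hβcont
  set C0 : ℝ := ∑ i, ∑ j, |Φ s₂ i j| with hC0_def
  have hC00 : 0 ≤ C0 :=
    Finset.sum_nonneg fun i _ => Finset.sum_nonneg fun j _ => abs_nonneg _
  have hΦbound : ∀ s ∈ Set.Icc 0 t, ∀ w : Fin m → ℝ, ‖w‖ ≤ R → ‖Φ s *ᵥ w‖ ≤ C0 * R := by
    intro s hs w hw
    rw [pi_norm_le_iff_of_nonneg (mul_nonneg hC00 hR0)]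
    intro i
    have hrw : (Φ s *ᵥ w) i = ∑ j, Φ s i j * w j := rfl
    rw [Real.norm_eq_abs, hrw]
    calc |∑ j, Φ s i j * w j| ≤ ∑ j, |Φ s i j * w j| := Finset.abs_sum_le_sum_abs _ _
      _ = ∑ j, |Φ s i j| * |w j| := by simp [abs_mul]
      _ ≤ ∑ j, |Φ s i j| * R := by
          apply Finset.sum_le_sum
          intro j _
          apply mul_le_mul_of_nonneg_left _ (abs_nonneg _)
          calc |w j| = ‖w j‖ := rfl
            _ ≤ ‖w‖ := norm_le_pi_norm w j
            _ ≤ R := hw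
      _ = (∑ j, |Φ s i j|) * R := (Finset.sum_mul _ _ _).symm
      _ ≤ C0 * R := by
          apply mul_le_mul_of_nonneg_right _ hR0
          calc ∑ j, |Φ s i j| ≤ ∑ i', ∑ j, |Φ s i' j| :=
                Finset.single_le_sum (f := fun i' => ∑ j, |Φ s i' j|)
                  (fun i' _ => Finset.sum_nonneg fun j _ => abs_nonneg _) (Finset.mem_univ i)
            _ ≤ C0 := hmax₂ hs
  -- measurability and integrability of the integrand
  have hGmeas : ∀ w : ℝ → Fin m → ℝ, Measurable w → Measurable fun s => Φ s *ᵥ w s := by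
    intro w hw
    rw [measurable_pi_iff]
    intro i
    have hrw : (fun s => (Φ s *ᵥ w s) i) = fun s => ∑ j, Φ s i j * w s j := rfl
    rw [hrw]
    exact Finset.measurable_sum _ fun j _ =>
      ((hΦ.matrix_elem i j).measurable).mul ((measurable_pi_apply j).comp hw)
  have hGint : ∀ w : ℝ → Fin m → ℝ, Measurable w →
      (∀ s ∈ Set.Icc 0 t, w s ∈ (U s : Set (Fin m → ℝ))) →
      IntervalIntegrable (fun s => Φ s *ᵥ w s) volume 0 t := by
    intro w hw hwU
    rw [intervalIntegrable_iff_integrableOn_Ioc_of_le ht0]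
    apply MeasureTheory.Integrable.mono' (g := fun _ => C0 * R) (integrable_const _)
      ((hGmeas w hw).aestronglyMeasurable.restrict)
    rw [ae_restrict_iff' measurableSet_Ioc]
    apply Filter.Eventually.of_forall
    intro s hs
    have hsIcc : s ∈ Set.Icc 0 t := Set.Ioc_subset_Icc_self hs
    have h1 : ‖w s‖ ≤ R := by
      apply hRB s
      rw [hVU s hsIcc]
      exact hwU s hsIcc
    exact hΦbound s hsIcc (w s) h1
  have hG_eq : ∀ (w : ℝ → Fin m → ℝ),
      (fun s => NormedSpace.exp (s • A) *ᵥ (B *ᵥ w s)) = fun s => Φ s *ᵥ w s := by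
    intro w
    funext s
    rw [Matrix.mulVec_mulVec]
  -- the linear functional x ↦ y ⬝ᵥ x
  set Ly : (Fin n → ℝ) →L[ℝ] ℝ := LinearMap.toContinuousLinearMap
    { toFun := fun x => y ⬝ᵥ x
      map_add' := fun a b => dotProduct_add y a b
      map_smul' := fun r a => by simp [dotProduct_smul, smul_eq_mul] } with hLy_def
  have hpoint : ∀ (w : ℝ → Fin m → ℝ) (s : ℝ), y ⬝ᵥ (Φ s *ᵥ w s) = f s ⬝ᵥ w s := by
    intro w s
    rw [Matrix.dotProduct_mulVec]
    have : f s = y ᵥ* Φ s := Matrix.mulVec_transpose (Φ s) y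
    rw [this]
  have hswap : ∀ w : ℝ → Fin m → ℝ, IntervalIntegrable (fun s => Φ s *ᵥ w s) volume 0 t →
      y ⬝ᵥ (∫ s in (0:ℝ)..t, Φ s *ᵥ w s) = ∫ s in (0:ℝ)..t, f s ⬝ᵥ w s := by
    intro w hw
    calc y ⬝ᵥ (∫ s in (0:ℝ)..t, Φ s *ᵥ w s)
        = Ly (∫ s in (0:ℝ)..t, Φ s *ᵥ w s) := rfl
      _ = ∫ s in (0:ℝ)..t, Ly (Φ s *ᵥ w s) := (Ly.intervalIntegral_comp_comm hw).symm
      _ = ∫ s in (0:ℝ)..t, f s ⬝ᵥ w s := by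
          apply intervalIntegral.integral_congr
          intro s _
          exact hpoint w s
  have hscal_int : ∀ w : ℝ → Fin m → ℝ, IntervalIntegrable (fun s => Φ s *ᵥ w s) volume 0 t →
      IntervalIntegrable (fun s => f s ⬝ᵥ w s) volume 0 t := by
    intro w hw
    have hrw : (fun s => f s ⬝ᵥ w s) = fun s => Ly (Φ s *ᵥ w s) := by
      funext s
      rw [← hpoint w s]
      rfl
    rw [hrw]
    exact ⟨Ly.integrable_comp hw.1, Ly.integrable_comp hw.2⟩
  have hgint : IntervalIntegrable g volume 0 t := hg_cont.intervalIntegrable 0 t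
  have huint : IntervalIntegrable (fun s => Φ s *ᵥ u s) volume 0 t := hGint u hu_meas hu_inU
  set e : Fin n → ℝ := NormedSpace.exp (t • A) *ᵥ x0 with he_def
  have hfc_s : ∀ s ∈ Set.Icc 0 t, fc s = f s := by
    intro s hs
    simp only [hfc_def]
    rw [hc_eq s hs]
  have hgreat : IsGreatest
      ((fun x => y ⬝ᵥ x) '' reachSet A B x0 t (fun s => (U s : Set (Fin m → ℝ))))
      (y ⬝ᵥ e + ∫ s in (0:ℝ)..t, g s) := by
    constructor
    · refine ⟨e + ∫ s in (0:ℝ)..t, NormedSpace.exp (s • A) *ᵥ (B *ᵥ u s),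
        ⟨u, hu_meas, hu_inU, rfl⟩, ?_⟩
      show y ⬝ᵥ (e + ∫ s in (0:ℝ)..t, NormedSpace.exp (s • A) *ᵥ (B *ᵥ u s)) = _
      rw [dotProduct_add, hG_eq u, hswap u huint]
      congr 1
      apply intervalIntegral.integral_congr
      intro s hs
      rw [Set.uIcc_of_le ht0] at hs
      show f s ⬝ᵥ u s = g s
      rw [← hfc_s s hs]
      exact (hu_mem s).2
    · rintro val ⟨x, ⟨w, hw_meas, hw_mem, rfl⟩, rfl⟩
      have hwint := hGint w hw_meas hw_mem
      show y ⬝ᵥ (e + ∫ s in (0:ℝ)..t, NormedSpace.exp (s • A) *ᵥ (B *ᵥ w s)) ≤ _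
      rw [dotProduct_add, hG_eq w, hswap w hwint]
      apply add_le_add_right
      apply intervalIntegral.integral_mono_on ht0 (hscal_int w hwint) hgint
      intro s hs
      have hw_in : w s ∈ (V s : Set (Fin m → ℝ)) := by
        rw [hVU s hs]
        exact hw_mem s hs
      calc f s ⬝ᵥ w s = fc s ⬝ᵥ w s := by rw [hfc_s s hs]
        _ ≤ g s := dotProduct_le_sptFn (V s).isCompact hw_in
  calc sptFn (reachSet A B x0 t (fun s => (U s : Set (Fin m → ℝ)))) y
      = y ⬝ᵥ e + ∫ s in (0:ℝ)..t, g s := hgreat.csSup_eq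
    _ = y ⬝ᵥ (NormedSpace.exp (t • A) *ᵥ x0) + ∫ s in (0:ℝ)..t,
          sptFn (U s : Set (Fin m → ℝ)) ((NormedSpace.exp (s • A) * B)ᵀ *ᵥ y) := by
        congr 1
        apply intervalIntegral.integral_congr
        intro s hs
        rw [Set.uIcc_of_le ht0] at hs
        show sptFn (V s : Set (Fin m → ℝ)) (fc s) = _
        rw [hVU s hs, hfc_s s hs]
end
end

section
/- Let c ∈ ℝⁿ, let t > 0, let G : [0,t] → ℝ^{n×m} be continuous, and let q ∈ [1,∞]. Define f₀(y) := ⟨c, y⟩ + ∫₀ᵗ ‖(G(s))ᵀ y‖_q ds, and for each integer K ≥ 1 define the trapezoidal approximation f_K(y) := ⟨c, y⟩ + (Δs/2) Σ_{k=1}^{K} ( ‖(G(s_{k−1}))ᵀ y‖_q + ‖(G(s_k))ᵀ y‖_q ), where Δs := t/K and s_k := kΔs. Then min_{‖y‖₂ ≤ 1} f_K(y) → min_{‖y‖₂ ≤ 1} f₀(y) as K → ∞. -/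
noncomputable section
open Matrix MeasureTheory TopologicalSpace Filter
open scoped ENNReal Pointwise

lemma aux_pnorm_cont (p : ℝ≥0∞) [Fact (1 ≤ p)] (m : ℕ) : Continuous (pnorm p (m := m)) :=
  (PiLp.continuous_toLp (p := p) (β := fun _ : Fin m => ℝ)).norm

lemma aux_coord_le {n : ℕ} {y : Fin n → ℝ} (h : euclNorm y ≤ 1) (i : Fin n) : |y i| ≤ 1 := by
  have h1 : y i ^ 2 ≤ ∑ j, y j ^ 2 :=
    Finset.single_le_sum (fun j _ => sq_nonneg (y j)) (Finset.mem_univ i)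
  have h2 := Real.sqrt_le_sqrt h1
  rw [Real.sqrt_sq_eq_abs] at h2
  exact h2.trans h

lemma aux_S_compact (n : ℕ) : IsCompact {y : Fin n → ℝ | euclNorm y ≤ 1} := by
  have hcont : Continuous (euclNorm (ι := Fin n)) := by
    unfold euclNorm; fun_prop
  have hclosed : IsClosed {y : Fin n → ℝ | euclNorm y ≤ 1} :=
    isClosed_Iic.preimage hcont
  refine IsCompact.of_isClosed_subset (isCompact_univ_pi fun _ : Fin n => isCompact_Icc
    (a := (-1:ℝ)) (b := 1)) hclosed ?_
  intro y hy
  intro i _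
  have := aux_coord_le hy i
  constructor <;> [linarith [abs_le.1 this |>.1]; exact (abs_le.1 this).2]

lemma aux_Phi_cont {n m : ℕ} (t : ℝ) (G : ℝ → Matrix (Fin n) (Fin m) ℝ)
    (hG : ContinuousOn G (Set.Icc 0 t)) (q : ℝ≥0∞) [Fact (1 ≤ q)] (S : Set (Fin n → ℝ)) :
    ContinuousOn (fun p : ℝ × (Fin n → ℝ) => pnorm q ((G p.1)ᵀ *ᵥ p.2))
      (Set.Icc 0 t ×ˢ S) := by
  apply (aux_pnorm_cont q m).comp_continuousOn
  apply continuousOn_pi.2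
  intro j
  have : (fun p : ℝ × (Fin n → ℝ) => ((G p.1)ᵀ *ᵥ p.2) j)
      = fun p : ℝ × (Fin n → ℝ) => ∑ i, G p.1 i j * p.2 i := by
    funext p; simp [mulVec, dotProduct, transpose, mul_comm]
  rw [this]
  apply continuousOn_finset_sum
  intro i _
  have hGij : ContinuousOn (fun p : ℝ × (Fin n → ℝ) => G p.1 i j) (Set.Icc 0 t ×ˢ S) := by
    have h1 : ContinuousOn (fun p : ℝ × (Fin n → ℝ) => G p.1) (Set.Icc 0 t ×ˢ S) :=
      hG.comp continuousOn_fst (fun p hp => hp.1)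
    exact ((continuous_apply j).comp (continuous_apply i)).comp_continuousOn h1
  exact hGij.mul (((continuous_apply i).comp continuous_snd).continuousOn)

lemma aux_csInf_diff_le {α : Type*} {S : Set α} (hS : S.Nonempty) {f g : α → ℝ} {ε B : ℝ}
    (hfB : ∀ y ∈ S, B ≤ f y) (hgB : ∀ y ∈ S, B ≤ g y)
    (h : ∀ y ∈ S, |f y - g y| ≤ ε) :
    |sInf (f '' S) - sInf (g '' S)| ≤ ε := by
  have hfne : (f '' S).Nonempty := hS.image f
  have hgne : (g '' S).Nonempty := hS.image g
  have hfbdd : BddBelow (f '' S) := ⟨B, by rintro _ ⟨y, hy, rfl⟩; exact hfB y hy⟩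
  have hgbdd : BddBelow (g '' S) := ⟨B, by rintro _ ⟨y, hy, rfl⟩; exact hgB y hy⟩
  rw [abs_sub_le_iff]
  constructor
  · have : sInf (f '' S) - ε ≤ sInf (g '' S) := by
      apply le_csInf hgne
      rintro _ ⟨y, hy, rfl⟩
      have h1 := csInf_le hfbdd (Set.mem_image_of_mem f hy)
      have h2 := abs_le.1 (h y hy)
      linarith [h2.1]
    linarith
  · have : sInf (g '' S) - ε ≤ sInf (f '' S) := by
      apply le_csInf hfne
      rintro _ ⟨y, hy, rfl⟩
      have h1 := csInf_le hgbdd (Set.mem_image_of_mem g hy)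
      have h2 := abs_le.1 (h y hy)
      linarith [h2.2]
    linarith

lemma aux_pnorm_nonneg (p : ℝ≥0∞) [Fact (1 ≤ p)] {m : ℕ} (u : Fin m → ℝ) :
    0 ≤ pnorm p u := norm_nonneg _

lemma aux_trap_interval {g : ℝ → ℝ} {a b ε : ℝ} (hab : a ≤ b)
    (hcont : ContinuousOn g (Set.Icc a b)) (hε : 0 ≤ ε)
    (hcl : ∀ s ∈ Set.Icc a b, |g s - g a| ≤ ε ∧ |g s - g b| ≤ ε) :
    |(b - a) / 2 * (g a + g b) - ∫ s in a..b, g s| ≤ (b - a) * ε := by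
  have hint : IntervalIntegrable g volume a b := by
    apply ContinuousOn.intervalIntegrable
    rwa [Set.uIcc_of_le hab]
  have hconst : (b - a) / 2 * (g a + g b) = ∫ _ in a..b, (g a + g b) / 2 := by
    rw [intervalIntegral.integral_const, smul_eq_mul]; ring
  rw [hconst, ← intervalIntegral.integral_sub (intervalIntegrable_const) hint]
  have := intervalIntegral.norm_integral_le_of_norm_le_const
    (f := fun s => (g a + g b) / 2 - g s) (a := a) (b := b) (C := ε) ?_
  · rw [Real.norm_eq_abs] at this
    calc |∫ s in a..b, ((g a + g b) / 2 - g s)| ≤ ε * |b - a| := this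
    _ = (b - a) * ε := by rw [abs_of_nonneg (by linarith)]; ring
  · intro x hx
    rw [Set.uIoc_of_le hab] at hx
    have hx' : x ∈ Set.Icc a b := ⟨le_of_lt hx.1, hx.2⟩
    obtain ⟨h1, h2⟩ := hcl x hx'
    rw [Real.norm_eq_abs]
    have e1 := abs_le.1 h1
    have e2 := abs_le.1 h2
    rw [abs_le]
    constructor <;> [linarith [e1.2, e2.2]; linarith [e1.1, e2.1]]

lemma aux_g_cont {n m : ℕ} (t : ℝ) (G : ℝ → Matrix (Fin n) (Fin m) ℝ)
    (hG : ContinuousOn G (Set.Icc 0 t)) (q : ℝ≥0∞) [Fact (1 ≤ q)] (y : Fin n → ℝ) :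
    ContinuousOn (fun s => pnorm q ((G s)ᵀ *ᵥ y)) (Set.Icc 0 t) := by
  apply (aux_pnorm_cont q m).comp_continuousOn
  apply continuousOn_pi.2
  intro j
  have h : (fun s : ℝ => ((G s)ᵀ *ᵥ y) j) = fun s => ∑ i, G s i j * y i := by
    funext s; simp [mulVec, dotProduct, transpose, mul_comm]
  rw [h]
  apply continuousOn_finset_sum
  intro i _
  exact (((continuous_apply j).comp (continuous_apply i)).comp_continuousOn hG).mul
    continuousOn_const

set_option maxHeartbeats 1000000 in
/-- the minima over the unit ball of the trapezoidal approximations `f_K`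
converge, as `K → ∞`, to the minimum over the unit ball of `f₀`. -/
theorem trapezoid_min_tendsto (n m : ℕ) (c : Fin n → ℝ) (t : ℝ) (ht : 0 < t)
    (G : ℝ → Matrix (Fin n) (Fin m) ℝ) (hG : ContinuousOn G (Set.Icc 0 t))
    (q : ℝ≥0∞) [Fact (1 ≤ q)]
    (f0 : (Fin n → ℝ) → ℝ)
    (hf0 : f0 = fun y => c ⬝ᵥ y + ∫ s in (0:ℝ)..t, pnorm q ((G s)ᵀ *ᵥ y))
    (fK : ℕ → (Fin n → ℝ) → ℝ)
    (hfK : ∀ K : ℕ, fK K = fun y => c ⬝ᵥ y +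
      (t / K) / 2 * ∑ k ∈ Finset.Icc 1 K,
        (pnorm q ((G (((k : ℝ) - 1) * (t / K)))ᵀ *ᵥ y) +
          pnorm q ((G ((k : ℝ) * (t / K)))ᵀ *ᵥ y))) :
    Tendsto (fun K : ℕ => sInf (fK K '' {y | euclNorm y ≤ 1})) atTop
      (nhds (sInf (f0 '' {y | euclNorm y ≤ 1}))) := by
  subst hf0
  set S : Set (Fin n → ℝ) := {y | euclNorm y ≤ 1} with hSdef
  have hS0 : (0 : Fin n → ℝ) ∈ S := by
    simp [hSdef, euclNorm]
  have hSne : S.Nonempty := ⟨0, hS0⟩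
  have hUC : UniformContinuousOn (fun p : ℝ × (Fin n → ℝ) => pnorm q ((G p.1)ᵀ *ᵥ p.2))
      (Set.Icc 0 t ×ˢ S) :=
    (isCompact_Icc.prod (aux_S_compact n)).uniformContinuousOn_of_continuous
      (aux_Phi_cont t G hG q S)
  rw [Metric.uniformContinuousOn_iff] at hUC
  have hdot : ∀ y ∈ S, -∑ i, |c i| ≤ c ⬝ᵥ y := by
    intro y hy
    have h1 : |c ⬝ᵥ y| ≤ ∑ i, |c i| := by
      refine (Finset.abs_sum_le_sum_abs _ _).trans (Finset.sum_le_sum fun i _ => ?_)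
      rw [abs_mul]
      exact mul_le_of_le_one_right (abs_nonneg _) (aux_coord_le hy i)
    linarith [(abs_le.1 h1).1]
  rw [Metric.tendsto_atTop]
  intro ε hε
  have hε' : 0 < ε / (2 * (t + 1)) := by positivity
  obtain ⟨δ, hδ, hδuc⟩ := hUC _ hε'
  obtain ⟨N, hN⟩ := exists_nat_gt (t / δ)
  refine ⟨max N 1, fun K hK => ?_⟩
  have hK1 : 1 ≤ K := le_trans (le_max_right N 1) hK
  have hKpos : (0:ℝ) < K := by exact_mod_cast Nat.lt_of_lt_of_le Nat.zero_lt_one hK1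
  have hΔδ : t / K < δ := by
    have h1 : t / δ < (K:ℝ) := lt_of_lt_of_le hN (by exact_mod_cast le_trans (le_max_left N 1) hK)
    rw [div_lt_iff₀ hδ] at h1
    rw [div_lt_iff₀ hKpos]
    linarith [h1]
  set Δ : ℝ := t / K with hΔdef
  have hΔpos : 0 < Δ := div_pos ht hKpos
  have hKΔ : (K:ℝ) * Δ = t := by rw [hΔdef]; field_simp
  have hmem : ∀ i : ℕ, i ≤ K → (i:ℝ) * Δ ∈ Set.Icc (0:ℝ) t := by
    intro i hi
    constructor
    · positivity
    · calc (i:ℝ) * Δ ≤ (K:ℝ) * Δ :=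
          mul_le_mul_of_nonneg_right (by exact_mod_cast hi) hΔpos.le
        _ = t := hKΔ
  -- pointwise bound
  have hpt : ∀ y ∈ S,
      |fK K y - (c ⬝ᵥ y + ∫ s in (0:ℝ)..t, pnorm q ((G s)ᵀ *ᵥ y))| ≤ t * (ε / (2 * (t + 1))) := by
    intro y hy
    set g : ℝ → ℝ := fun s => pnorm q ((G s)ᵀ *ᵥ y) with hgdef
    have hgc : ContinuousOn g (Set.Icc 0 t) := aux_g_cont t G hG q y
    have hsub : ∀ i : ℕ, i < K → Set.Icc ((i:ℝ) * Δ) (((i:ℝ) + 1) * Δ) ⊆ Set.Icc 0 t := by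
      intro i hi
      apply Set.Icc_subset_Icc
      · exact (hmem i hi.le).1
      · have := (hmem (i+1) hi).2
        push_cast at this ⊢
        linarith
    have hint : ∀ i : ℕ, i < K →
        IntervalIntegrable g volume ((i:ℝ) * Δ) (((i:ℝ) + 1) * Δ) := by
      intro i hi
      apply ContinuousOn.intervalIntegrable
      rw [Set.uIcc_of_le (by nlinarith)]
      exact hgc.mono (hsub i hi)
    have hsplit : ∑ i ∈ Finset.range K, ∫ s in ((i:ℝ) * Δ)..(((i:ℝ) + 1) * Δ), g s
        = ∫ s in (0:ℝ)..t, g s := by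
      have h := intervalIntegral.sum_integral_adjacent_intervals
        (a := fun i : ℕ => (i:ℝ) * Δ) (n := K) (f := g) (μ := volume) ?_
      · rw [show ((0:ℕ):ℝ) * Δ = 0 by simp, hKΔ] at h
        rw [← h]
        apply Finset.sum_congr rfl
        intro i _
        push_cast
        ring_nf
      · intro k hk
        have := hint k hk
        push_cast at this ⊢
        convert this using 2 <;> ring
    -- rewrite fK sum
    have hreidx : ∑ k ∈ Finset.Icc 1 K,
        (pnorm q ((G (((k : ℝ) - 1) * Δ))ᵀ *ᵥ y) + pnorm q ((G ((k : ℝ) * Δ))ᵀ *ᵥ y))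
        = ∑ i ∈ Finset.range K, (g ((i:ℝ) * Δ) + g (((i:ℝ) + 1) * Δ)) := by
      rw [← Finset.Ico_add_one_right_eq_Icc, Finset.sum_Ico_eq_sum_range]
      apply Finset.sum_congr (by simp)
      intro i _
      push_cast
      ring_nf
      rfl
    rw [hfK K]
    simp only [← hΔdef]
    rw [hreidx, ← hsplit, Finset.mul_sum]
    rw [show ∀ a b₁ b₂ : ℝ, a + b₁ - (a + b₂) = b₁ - b₂ from fun a b₁ b₂ => by ring,
      ← Finset.sum_sub_distrib]
    refine (Finset.abs_sum_le_sum_abs _ _).trans ?_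
    have hbound : ∀ i ∈ Finset.range K,
        |Δ / 2 * (g ((i:ℝ) * Δ) + g (((i:ℝ) + 1) * Δ))
          - ∫ s in ((i:ℝ) * Δ)..(((i:ℝ) + 1) * Δ), g s| ≤ Δ * (ε / (2 * (t + 1))) := by
      intro i hi
      rw [Finset.mem_range] at hi
      have hab : (i:ℝ) * Δ ≤ ((i:ℝ) + 1) * Δ := by nlinarith
      have hba : ((i:ℝ) + 1) * Δ - (i:ℝ) * Δ = Δ := by ring
      have hcl : ∀ s ∈ Set.Icc ((i:ℝ) * Δ) (((i:ℝ) + 1) * Δ),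
          |g s - g ((i:ℝ) * Δ)| ≤ ε / (2 * (t + 1)) ∧
          |g s - g (((i:ℝ) + 1) * Δ)| ≤ ε / (2 * (t + 1)) := by
        intro s hs
        have hsIcc : s ∈ Set.Icc (0:ℝ) t := hsub i hi hs
        have hmema : ((i:ℝ) * Δ, y) ∈ Set.Icc (0:ℝ) t ×ˢ S := ⟨hmem i hi.le, hy⟩
        have hmemb : (((i:ℝ) + 1) * Δ, y) ∈ Set.Icc (0:ℝ) t ×ˢ S := by
          refine ⟨?_, hy⟩
          have := hmem (i+1) hi
          push_cast at this
          exact this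
        have hmems : (s, y) ∈ Set.Icc (0:ℝ) t ×ˢ S := ⟨hsIcc, hy⟩
        constructor
        · have hd : dist (s, y) (((i:ℝ) * Δ, y)) < δ := by
            rw [Prod.dist_eq]
            simp only [dist_self]
            rw [max_eq_left dist_nonneg, Real.dist_eq]
            rw [abs_of_nonneg (by linarith [hs.1])]
            calc s - (i:ℝ) * Δ ≤ ((i:ℝ) + 1) * Δ - (i:ℝ) * Δ := by linarith [hs.2]
              _ = Δ := hba
              _ < δ := hΔδ
          have := hδuc _ hmems _ hmema hd
          rw [Real.dist_eq] at this
          exact this.le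
        · have hd : dist (s, y) ((((i:ℝ) + 1) * Δ, y)) < δ := by
            rw [Prod.dist_eq]
            simp only [dist_self]
            rw [max_eq_left dist_nonneg, Real.dist_eq]
            rw [abs_of_nonpos (by linarith [hs.2])]
            calc -(s - ((i:ℝ) + 1) * Δ) ≤ ((i:ℝ) + 1) * Δ - (i:ℝ) * Δ := by linarith [hs.1]
              _ = Δ := hba
              _ < δ := hΔδ
          have := hδuc _ hmems _ hmemb hd
          rw [Real.dist_eq] at this
          exact this.le
      have h3 := aux_trap_interval hab (hgc.mono (hsub i hi)) hε'.le hcl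
      rw [hba] at h3
      exact h3
    refine le_trans (Finset.sum_le_sum hbound) ?_
    rw [Finset.sum_const, Finset.card_range, nsmul_eq_mul, ← mul_assoc, hKΔ]
  -- lower bounds
  have hf0B : ∀ y ∈ S, -∑ i, |c i| ≤ c ⬝ᵥ y + ∫ s in (0:ℝ)..t, pnorm q ((G s)ᵀ *ᵥ y) := by
    intro y hy
    have h2 : 0 ≤ ∫ s in (0:ℝ)..t, pnorm q ((G s)ᵀ *ᵥ y) :=
      intervalIntegral.integral_nonneg ht.le (fun s _ => aux_pnorm_nonneg q _)
    linarith [hdot y hy]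
  have hfKB : ∀ y ∈ S, -∑ i, |c i| ≤ fK K y := by
    intro y hy
    rw [hfK K]
    have h2 : 0 ≤ (t / K) / 2 * ∑ k ∈ Finset.Icc 1 K,
        (pnorm q ((G (((k : ℝ) - 1) * (t / K)))ᵀ *ᵥ y) +
          pnorm q ((G ((k : ℝ) * (t / K)))ᵀ *ᵥ y)) := by
      refine mul_nonneg (by positivity) (Finset.sum_nonneg fun k _ => ?_)
      exact add_nonneg (aux_pnorm_nonneg q _) (aux_pnorm_nonneg q _)
    simp only []
    linarith [hdot y hy]
  have hfinal := aux_csInf_diff_le hSne hfKB hf0B hpt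
  rw [Real.dist_eq]
  refine lt_of_le_of_lt hfinal ?_
  rw [← mul_div_assoc, div_lt_iff₀ (by linarith : (0:ℝ) < 2 * (t + 1))]
  nlinarith [hε, ht]
end
end

section
/- Let r ≥ 1, let A₀ ∈ ℝ^{r×r} be the nilpotent upper-shift matrix with (A₀)_{a,a+1} = 1 and all other entries zero, and let ξ(s) := (s^{r−1}/(r−1)!, …, s, 1)ᵀ ∈ ℝ^r. Let t > 0, x₀ ∈ ℝ^r, and let α, β : [0,t] → ℝ be continuous with α(s) ≤ β(s) for all s. Define the single-input reach set X_t := { exp(tA₀)x₀ + ∫₀ᵗ ξ(s) u(s) ds : u : [0,t] → ℝ Lebesgue-measurable with α(s) ≤ u(s) ≤ β(s) for all s }. Then for every y ∈ ℝ^r, h_{X_t}(y) = ⟨y, exp(tA₀)x₀⟩ + ∫₀ᵗ [ ν(s) ⟨y, ξ(s)⟩ + μ(s) |⟨y, ξ(s)⟩| ] ds, where μ(s) := (β(s) − α(s))/2 and ν(s) := (β(s) + α(s))/2. -/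
noncomputable section
open Matrix MeasureTheory TopologicalSpace Filter
open scoped ENNReal Pointwise

lemma xi_continuous (r : ℕ) : Continuous (xi r) :=
  continuous_pi fun a => (continuous_pow _).div_const _

lemma aux_int (r : ℕ) {t : ℝ} (ht : 0 ≤ t) (y : Fin r → ℝ)
    (u : ℝ → ℝ) (hu : Measurable u) (C : ℝ)
    (hC : ∀ s ∈ Set.Icc 0 t, |u s| ≤ C) :
    IntervalIntegrable (fun s => u s • xi r s) volume 0 t ∧
    y ⬝ᵥ (∫ s in (0:ℝ)..t, u s • xi r s) = ∫ s in (0:ℝ)..t, u s * (y ⬝ᵥ xi r s) := by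
  obtain ⟨D, hD⟩ := isCompact_Icc.exists_bound_of_continuousOn
    ((xi_continuous r).continuousOn (s := Set.Icc 0 t))
  have hC0 : 0 ≤ C := le_trans (abs_nonneg _) (hC 0 ⟨le_refl _, ht⟩)
  have hmeas : Measurable (fun s => u s • xi r s) :=
    hu.smul (xi_continuous r).measurable
  have hInt : IntervalIntegrable (fun s => u s • xi r s) volume 0 t := by
    rw [intervalIntegrable_iff, Set.uIoc_of_le ht]
    refine (integrable_const (C * D)).mono' hmeas.aestronglyMeasurable ?_
    rw [ae_restrict_iff' measurableSet_Ioc]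
    refine ae_of_all _ fun s hs => ?_
    have hs' : s ∈ Set.Icc 0 t := Set.Ioc_subset_Icc_self hs
    have h1 := hC s hs'
    have h2 := hD s hs'
    calc ‖u s • xi r s‖ = |u s| * ‖xi r s‖ := by
          rw [norm_smul, Real.norm_eq_abs]
      _ ≤ C * D := mul_le_mul h1 h2 (norm_nonneg _) hC0
  refine ⟨hInt, ?_⟩
  let Llin : (Fin r → ℝ) →ₗ[ℝ] ℝ :=
    { toFun := fun v => y ⬝ᵥ v
      map_add' := fun a b => by simp [dotProduct_add]
      map_smul' := fun m a => by simp [dotProduct_smul, smul_eq_mul] }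
  let L : (Fin r → ℝ) →L[ℝ] ℝ := LinearMap.toContinuousLinearMap Llin
  have hLv : ∀ v, L v = y ⬝ᵥ v := fun v => rfl
  have := L.intervalIntegral_comp_comm hInt
  rw [← hLv, ← this]
  refine intervalIntegral.integral_congr fun s _ => ?_
  simp only [hLv, dotProduct_smul, smul_eq_mul]

/-- support function of the single-input integrator reach set with scalar
input confined to `[α(s), β(s)]`. -/
theorem sptFn_reachSet1_box (r : ℕ) (hr : 1 ≤ r) (t : ℝ) (ht : 0 < t)
    (x0 : Fin r → ℝ) (α β : ℝ → ℝ)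
    (hα : ContinuousOn α (Set.Icc 0 t)) (hβ : ContinuousOn β (Set.Icc 0 t))
    (hαβ : ∀ s ∈ Set.Icc (0:ℝ) t, α s ≤ β s) (y : Fin r → ℝ) :
    sptFn (reachSet1 x0 t α β) y =
      y ⬝ᵥ (NormedSpace.exp (t • shiftMat r) *ᵥ x0) +
        ∫ s in (0:ℝ)..t,
          ((β s + α s) / 2 * (y ⬝ᵥ xi r s) + (β s - α s) / 2 * |y ⬝ᵥ xi r s|) := by
  set c : ℝ → ℝ := fun s => y ⬝ᵥ xi r s with hcdef
  have hcc : Continuous c := by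
    have : Continuous fun s => ∑ i, y i * xi r s i :=
      continuous_finset_sum _ fun i _ =>
        continuous_const.mul ((continuous_pow _).div_const _)
    simpa [hcdef, dotProduct] using this
  set g : ℝ → ℝ := fun s => (β s + α s) / 2 * c s + (β s - α s) / 2 * |c s| with hgdef
  have hgcont : ContinuousOn g (Set.Icc 0 t) :=
    (((hβ.add hα).div_const 2).mul hcc.continuousOn).add
      (((hβ.sub hα).div_const 2).mul hcc.abs.continuousOn)
  have hgint : IntervalIntegrable g volume 0 t := by
    apply ContinuousOn.intervalIntegrable
    rwa [Set.uIcc_of_le ht.le]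
  -- bounds
  obtain ⟨Ca, hCa⟩ := isCompact_Icc.exists_bound_of_continuousOn hα
  obtain ⟨Cb, hCb⟩ := isCompact_Icc.exists_bound_of_continuousOn hβ
  set C : ℝ := max Ca Cb with hCdef
  have hboxC : ∀ u : ℝ → ℝ, (∀ s ∈ Set.Icc 0 t, u s ∈ Set.Icc (α s) (β s)) →
      ∀ s ∈ Set.Icc 0 t, |u s| ≤ C := by
    intro u hmem s hs
    have h1 := (hmem s hs).1
    have h2 := (hmem s hs).2
    have ha := abs_le.1 (hCa s hs)
    have hb := abs_le.1 (hCb s hs)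
    rw [abs_le]
    constructor
    · calc -C ≤ -Ca := neg_le_neg (le_max_left _ _)
        _ ≤ α s := ha.1
        _ ≤ u s := h1
    · calc u s ≤ β s := h2
        _ ≤ Cb := hb.2
        _ ≤ C := le_max_right _ _
  -- upper bound
  have hub : ∀ x ∈ reachSet1 x0 t α β, y ⬝ᵥ x ≤
      y ⬝ᵥ (NormedSpace.exp (t • shiftMat r) *ᵥ x0) + ∫ s in (0:ℝ)..t, g s := by
    rintro x ⟨u, hu, hmem, rfl⟩
    obtain ⟨hInt, hswap⟩ := aux_int r ht.le y u hu C (hboxC u hmem)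
    rw [dotProduct_add, hswap]
    refine add_le_add le_rfl ?_
    have hucint : IntervalIntegrable (fun s => u s * c s) volume 0 t := by
      rw [intervalIntegrable_iff, Set.uIoc_of_le ht.le]
      obtain ⟨D, hD⟩ := isCompact_Icc.exists_bound_of_continuousOn
        (hcc.continuousOn (s := Set.Icc 0 t))
      have hC0 : 0 ≤ C := le_trans (abs_nonneg _)
        (hboxC u hmem 0 ⟨le_refl _, ht.le⟩)
      refine (integrable_const (C * D)).mono'
        ((hu.mul hcc.measurable).aestronglyMeasurable) ?_
      rw [ae_restrict_iff' measurableSet_Ioc]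
      refine ae_of_all _ fun s hs => ?_
      have hs' : s ∈ Set.Icc 0 t := Set.Ioc_subset_Icc_self hs
      calc ‖u s * c s‖ = |u s| * |c s| := abs_mul _ _
        _ ≤ C * D := mul_le_mul (hboxC u hmem s hs')
              (le_trans (le_refl _) (hD s hs')) (abs_nonneg _) hC0
    refine intervalIntegral.integral_mono_on ht.le hucint hgint fun s hs => ?_
    have h1 := (hmem s hs).1
    have h2 := (hmem s hs).2
    rcases le_or_gt 0 (c s) with h | h
    · simp only [hgdef]; rw [abs_of_nonneg h]; nlinarith
    · simp only [hgdef]; rw [abs_of_neg h]; nlinarith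
  -- optimal input
  have h0t : (0:ℝ) ≤ t := ht.le
  set αe : ℝ → ℝ := Set.IccExtend h0t ((Set.Icc (0:ℝ) t).restrict α) with hαedef
  set βe : ℝ → ℝ := Set.IccExtend h0t ((Set.Icc (0:ℝ) t).restrict β) with hβedef
  have hαe : Continuous αe := hα.restrict.Icc_extend'
  have hβe : Continuous βe := hβ.restrict.Icc_extend'
  have hαeq : ∀ s ∈ Set.Icc (0:ℝ) t, αe s = α s := fun s hs =>
    Set.IccExtend_of_mem h0t _ hs
  have hβeq : ∀ s ∈ Set.Icc (0:ℝ) t, βe s = β s := fun s hs =>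
    Set.IccExtend_of_mem h0t _ hs
  set u : ℝ → ℝ := fun s => if 0 ≤ c s then βe s else αe s with hudef
  have hu : Measurable u :=
    Measurable.ite (measurableSet_le measurable_const hcc.measurable)
      hβe.measurable hαe.measurable
  have hmem : ∀ s ∈ Set.Icc 0 t, u s ∈ Set.Icc (α s) (β s) := by
    intro s hs
    simp only [hudef]
    split
    · exact ⟨hβeq s hs ▸ hαβ s hs, le_of_eq (hβeq s hs)⟩
    · exact ⟨le_of_eq (hαeq s hs).symm, hαeq s hs ▸ hαβ s hs⟩
  have hxmem : (NormedSpace.exp (t • shiftMat r) *ᵥ x0 +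
      ∫ s in (0:ℝ)..t, u s • xi r s) ∈ reachSet1 x0 t α β :=
    ⟨u, hu, hmem, rfl⟩
  have hueq : ∀ s ∈ Set.Icc (0:ℝ) t, u s * c s = g s := by
    intro s hs
    simp only [hudef, hgdef]
    split
    · next h => rw [hβeq s hs, abs_of_nonneg h]; ring
    · next h => rw [hαeq s hs, abs_of_neg (lt_of_not_ge h)]; ring
  have heq : y ⬝ᵥ (NormedSpace.exp (t • shiftMat r) *ᵥ x0 +
      ∫ s in (0:ℝ)..t, u s • xi r s) =
      y ⬝ᵥ (NormedSpace.exp (t • shiftMat r) *ᵥ x0) + ∫ s in (0:ℝ)..t, g s := by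
    obtain ⟨hInt, hswap⟩ := aux_int r ht.le y u hu C (hboxC u hmem)
    rw [dotProduct_add, hswap]
    congr 1
    refine intervalIntegral.integral_congr fun s hs => ?_
    exact hueq s (by rwa [Set.uIcc_of_le ht.le] at hs)
  have hgreat : IsGreatest ((fun x => y ⬝ᵥ x) '' reachSet1 x0 t α β)
      (y ⬝ᵥ (NormedSpace.exp (t • shiftMat r) *ᵥ x0) + ∫ s in (0:ℝ)..t, g s) := by
    constructor
    · exact ⟨_, hxmem, heq⟩
    · rintro z ⟨x, hx, rfl⟩
      exact hub x hx
  exact hgreat.csSup_eq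
end
end

section
/- Let r ≥ 1, let A₀ ∈ ℝ^{r×r} be the nilpotent upper-shift matrix, and let ξ(s) := (s^{r−1}/(r−1)!, …, s, 1)ᵀ ∈ ℝ^r. Let t > 0; for i ∈ {A, B} let x₀^i ∈ ℝ^r and let α^i, β^i : [0,t] → ℝ be continuous with α^i(s) ≤ β^i(s), and let X_t^i := { exp(tA₀)x₀^i + ∫₀ᵗ ξ(s) u(s) ds : u measurable, α^i(s) ≤ u(s) ≤ β^i(s) for all s }. Set μ^i(s) := (β^i(s) − α^i(s))/2, ν^i(s) := (β^i(s) + α^i(s))/2, c(t) := exp(tA₀)(x₀^A − x₀^B) + ∫₀ᵗ (ν^A(s) − ν^B(s)) ξ(s) ds, and f(y) := ⟨c(t), y⟩ + ∫₀ᵗ (μ^A(s) + μ^B(s)) |⟨y, ξ(s)⟩| ds. Let p̃* := min_{‖y‖₂ ≤ 1} f(y). Then p̃* ≤ 0, and if p̃* = 0 then min_{‖y‖₂ = 1} f(y) ≥ 0 and X_t^A ∩ X_t^B ≠ ∅. -/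
noncomputable section
open Matrix MeasureTheory TopologicalSpace Filter
open scoped ENNReal Pointwise

section helpers
open Set Finset Module

lemma euclNorm_nonneg {ι : Type*} [Fintype ι] (y : ι → ℝ) : 0 ≤ euclNorm y :=
  Real.sqrt_nonneg _

lemma euclNorm_zero {ι : Type*} [Fintype ι] : euclNorm (0 : ι → ℝ) = 0 := by
  simp [euclNorm]

lemma euclNorm_eq_zero {ι : Type*} [Fintype ι] {y : ι → ℝ} (h : euclNorm y = 0) : y = 0 := by
  have hsum : ∑ i, y i ^ 2 = 0 := by
    have h1 := Real.sqrt_eq_zero'.mp h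
    exact le_antisymm h1 (Finset.sum_nonneg fun i _ => sq_nonneg _)
  funext i
  have : y i ^ 2 = 0 := by
    have := (Finset.sum_eq_zero_iff_of_nonneg (fun i _ => sq_nonneg (y i))).mp hsum i
      (Finset.mem_univ i)
    exact this
  exact pow_eq_zero_iff (by norm_num) |>.mp this

lemma euclNorm_smul {ι : Type*} [Fintype ι] (a : ℝ) (y : ι → ℝ) :
    euclNorm (a • y) = |a| * euclNorm y := by
  unfold euclNorm
  rw [← Real.sqrt_sq_eq_abs, ← Real.sqrt_mul (sq_nonneg a)]
  congr 1
  rw [Finset.mul_sum]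
  refine Finset.sum_congr rfl fun i _ => ?_
  simp [mul_pow]

lemma euclNorm_single {ι : Type*} [Fintype ι] [DecidableEq ι] (i : ι) :
    euclNorm (Pi.single i (1:ℝ)) = 1 := by
  unfold euclNorm
  rw [Real.sqrt_eq_one]
  rw [Finset.sum_eq_single i]
  · simp
  · intro j _ hj; simp [Pi.single_apply, hj]
  · intro h; exact absurd (Finset.mem_univ i) h

lemma abs_le_one_of_euclNorm_le_one {ι : Type*} [Fintype ι] {y : ι → ℝ}
    (h : euclNorm y ≤ 1) (i : ι) : |y i| ≤ 1 := by
  have hsum : ∑ j, y j ^ 2 ≤ 1 := by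
    by_contra hc
    push_neg at hc
    have := Real.lt_sqrt (by norm_num : (0:ℝ) ≤ 1) |>.mpr (by simpa using hc)
    unfold euclNorm at h
    nlinarith [Real.sq_sqrt (Finset.sum_nonneg fun j (_ : j ∈ Finset.univ) => sq_nonneg (y j))]
  have h1 : y i ^ 2 ≤ 1 := by
    have : y i ^ 2 ≤ ∑ j, y j ^ 2 :=
      Finset.single_le_sum (fun j _ => sq_nonneg (y j)) (Finset.mem_univ i)
    linarith
  nlinarith [abs_nonneg (y i), sq_abs (y i)]

-- sign lemmas
lemma measurable_rsign : Measurable Real.sign := by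
  have : Real.sign = fun x : ℝ => if x < 0 then (-1:ℝ) else if 0 < x then 1 else 0 := by
    funext x; rfl
  rw [this]
  exact Measurable.ite measurableSet_Iio measurable_const
    (Measurable.ite measurableSet_Ioi measurable_const measurable_const)

lemma continuousAt_rsign {x : ℝ} (hx : x ≠ 0) : ContinuousAt Real.sign x := by
  rcases hx.lt_or_gt with h | h
  · have : Real.sign =ᶠ[nhds x] fun _ => (-1:ℝ) := by
      filter_upwards [Iio_mem_nhds h] with z hz
      exact Real.sign_of_neg hz
    exact this.continuousAt
  · have : Real.sign =ᶠ[nhds x] fun _ => (1:ℝ) := by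
      filter_upwards [Ioi_mem_nhds h] with z hz
      exact Real.sign_of_pos hz
    exact this.continuousAt

lemma rsign_mul_pos {a z : ℝ} (ha : 0 < a) : Real.sign (a * z) = Real.sign z := by
  rcases lt_trichotomy z 0 with h | h | h
  · rw [Real.sign_of_neg h, Real.sign_of_neg (mul_neg_of_pos_of_neg ha h)]
  · simp [h]
  · rw [Real.sign_of_pos h, Real.sign_of_pos (mul_pos ha h)]

lemma rsign_mul_self (z : ℝ) : Real.sign z * z = |z| := by
  rcases lt_trichotomy z 0 with h | h | h
  · rw [Real.sign_of_neg h, abs_of_neg h]; ring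
  · simp [h]
  · rw [Real.sign_of_pos h, abs_of_pos h]; ring

lemma abs_rsign_le_one (z : ℝ) : |Real.sign z| ≤ 1 := by
  rcases lt_trichotomy z 0 with h | h | h
  · rw [Real.sign_of_neg h]; norm_num
  · simp [h]
  · rw [Real.sign_of_pos h]; norm_num

-- polynomial root finiteness
lemma dot_xi_roots_finite {r : ℕ} {q : Fin r → ℝ} (hq : q ≠ 0) :
    {s : ℝ | q ⬝ᵥ xi r s = 0}.Finite := by
  classical
  set P : Polynomial ℝ := ∑ i : Fin r,
    Polynomial.C (q i / (Nat.factorial (r - 1 - (i:ℕ)))) * Polynomial.X ^ (r - 1 - (i:ℕ)) with hP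
  have heval : ∀ s, P.eval s = q ⬝ᵥ xi r s := by
    intro s
    rw [hP, Polynomial.eval_finset_sum]
    refine Finset.sum_congr rfl fun i _ => ?_
    simp [xi, dotProduct, div_mul_eq_mul_div, mul_div_assoc]
  have hne : P ≠ 0 := by
    obtain ⟨i, hi⟩ := Function.ne_iff.mp hq
    intro h0
    have hcoeff : P.coeff (r - 1 - (i:ℕ)) = q i / (Nat.factorial (r - 1 - (i:ℕ))) := by
      rw [hP, Polynomial.finset_sum_coeff]
      rw [Finset.sum_eq_single i]
      · simp [Polynomial.coeff_C_mul, Polynomial.coeff_X_pow]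
      · intro j _ hj
        have hne' : ¬((r - 1 - (i:ℕ)) = (r - 1 - (j:ℕ))) := by
          have hj' := j.isLt; have hi' := i.isLt
          intro heq
          exact hj (Fin.ext (by omega))
        simp [Polynomial.coeff_C_mul, Polynomial.coeff_X_pow, hne']
      · intro h; exact absurd (Finset.mem_univ i) h
    rw [h0] at hcoeff
    simp only [Polynomial.coeff_zero] at hcoeff
    have := hcoeff.symm
    rw [div_eq_zero_iff] at this
    rcases this with h1 | h1
    · exact hi h1
    · exact (Nat.cast_ne_zero.mpr (Nat.factorial_ne_zero _)) h1
  have hset : {s : ℝ | q ⬝ᵥ xi r s = 0} = {x | P.IsRoot x} := by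
    ext s
    simp only [Set.mem_setOf_eq, Polynomial.IsRoot, heval]
  rw [hset]
  exact Polynomial.finite_setOf_isRoot hne



lemma myIsCompact_convexHull {E : Type*} [NormedAddCommGroup E] [NormedSpace ℝ E]
    [FiniteDimensional ℝ E] {s : Set E} (hs : IsCompact s) (hne : s.Nonempty) :
    IsCompact (convexHull ℝ s) := by
  classical
  obtain ⟨x₀, hx₀⟩ := hne
  set n := finrank ℝ E + 1 with hn
  set T : (Fin n → ℝ) × (Fin n → E) → E := fun p => ∑ i, p.1 i • p.2 i with hT
  have hTcont : Continuous T := by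
    apply continuous_finset_sum
    intro i _
    exact ((continuous_apply i).comp continuous_fst).smul
      ((continuous_apply i).comp continuous_snd)
  have hdom : IsCompact ((stdSimplex ℝ (Fin n)) ×ˢ (Set.pi Set.univ (fun _ : Fin n => s))) :=
    (isCompact_stdSimplex (𝕜 := ℝ) (ι := Fin n)).prod (isCompact_univ_pi fun _ => hs)
  have heq : convexHull ℝ s = T '' ((stdSimplex ℝ (Fin n)) ×ˢ (Set.pi Set.univ (fun _ : Fin n => s))) := by
    apply Set.Subset.antisymm
    · intro x hx
      obtain ⟨ι, _inst, z, w, hrange, haff, hpos, hsum, hrep⟩ :=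
        eq_pos_convex_span_of_mem_convexHull hx
      have hcard : Fintype.card ι ≤ n := by
        calc Fintype.card ι ≤ finrank ℝ (vectorSpan ℝ (Set.range z)) + 1 :=
              haff.card_le_finrank_succ
          _ ≤ n := by
              have := Submodule.finrank_le (vectorSpan ℝ (Set.range z))
              omega
      obtain ⟨e⟩ : Nonempty (ι ↪ Fin n) := by
        apply Function.Embedding.nonempty_of_card_le
        simpa using hcard
      set w' : Fin n → ℝ := fun j => ∑ i ∈ Finset.univ.filter (fun i => e i = j), w i with hw'
      set z' : Fin n → E := fun j => if h : ∃ i, e i = j then z h.choose else x₀ with hz'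
      refine ⟨(w', z'), ⟨?_, ?_⟩, ?_⟩
      · constructor
        · intro j
          exact Finset.sum_nonneg fun i _ => (hpos i).le
        · rw [← hsum]
          exact Finset.sum_fiberwise _ _ _
      · intro j _
        simp only [hz']
        split
        · next h => exact hrange ⟨_, rfl⟩
        · exact hx₀
      · simp only [hT]
        have : ∑ j, w' j • z' j = ∑ j, ∑ i ∈ Finset.univ.filter (fun i => e i = j), w i • z i := by
          refine Finset.sum_congr rfl fun j _ => ?_
          rw [hw', Finset.sum_smul]
          refine Finset.sum_congr rfl fun i hi => ?_
          have hij : e i = j := (Finset.mem_filter.mp hi).2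
          have hex : ∃ i', e i' = j := ⟨i, hij⟩
          have : hex.choose = i := e.injective (hex.choose_spec.trans hij.symm)
          simp only [hz', dif_pos hex, this]
        rw [this, Finset.sum_fiberwise, hrep]
    · rintro _ ⟨⟨w, z⟩, ⟨hw, hz⟩, rfl⟩
      exact (convex_convexHull ℝ s).sum_mem (fun i _ => hw.1 i) hw.2
        (fun i _ => subset_convexHull ℝ s (hz i (Set.mem_univ i)))
  rw [heq]
  exact hdom.image hTcont

end helpers
/-- for single-input integrator agents with box input uncertainties, the
optimal value `p̃*` of the convexified problem is nonpositive; if it is zero, then the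
minimum over the sphere is nonnegative and the reach sets intersect. -/
theorem box_convexified_nonpos_and_zero_implies_intersect (r : ℕ) (hr : 1 ≤ r)
    (t : ℝ) (ht : 0 < t) (x0A x0B : Fin r → ℝ)
    (αA βA αB βB : ℝ → ℝ)
    (hαA : ContinuousOn αA (Set.Icc 0 t)) (hβA : ContinuousOn βA (Set.Icc 0 t))
    (hαB : ContinuousOn αB (Set.Icc 0 t)) (hβB : ContinuousOn βB (Set.Icc 0 t))
    (hA : ∀ s ∈ Set.Icc (0:ℝ) t, αA s ≤ βA s)
    (hB : ∀ s ∈ Set.Icc (0:ℝ) t, αB s ≤ βB s)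
    (XA XB : Set (Fin r → ℝ))
    (hXA : XA = reachSet1 x0A t αA βA) (hXB : XB = reachSet1 x0B t αB βB)
    (c : Fin r → ℝ)
    (hc : c = NormedSpace.exp (t • shiftMat r) *ᵥ (x0A - x0B) +
      ∫ s in (0:ℝ)..t, ((βA s + αA s) / 2 - (βB s + αB s) / 2) • xi r s)
    (f : (Fin r → ℝ) → ℝ)
    (hf : f = fun y => c ⬝ᵥ y +
      ∫ s in (0:ℝ)..t, ((βA s - αA s) / 2 + (βB s - αB s) / 2) * |y ⬝ᵥ xi r s|)
    (ptil : ℝ) (hptil : ptil = sInf (f '' {y | euclNorm y ≤ 1})) :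
    ptil ≤ 0 ∧
    (ptil = 0 → 0 ≤ sInf (f '' {y | euclNorm y = 1}) ∧ (XA ∩ XB).Nonempty) := by
  classical
  have hfy : ∀ y, f y = c ⬝ᵥ y +
      ∫ s in (0:ℝ)..t, ((βA s - αA s) / 2 + (βB s - αB s) / 2) * |y ⬝ᵥ xi r s| := by
    intro y; rw [hf]
  -- nonnegativity of the integral term
  have hint_nonneg : ∀ y, 0 ≤
      ∫ s in (0:ℝ)..t, ((βA s - αA s) / 2 + (βB s - αB s) / 2) * |y ⬝ᵥ xi r s| := by
    intro y
    apply intervalIntegral.integral_nonneg ht.le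
    intro s hs
    have h1 := hA s hs; have h2 := hB s hs
    have : 0 ≤ (βA s - αA s) / 2 + (βB s - αB s) / 2 := by linarith
    exact mul_nonneg this (abs_nonneg _)
  -- lower bound on the ball
  have hlb : ∀ y, euclNorm y ≤ 1 → -(∑ i, |c i|) ≤ f y := by
    intro y hy
    rw [hfy]
    have h1 : -(∑ i, |c i|) ≤ c ⬝ᵥ y := by
      have h2 : |c ⬝ᵥ y| ≤ ∑ i, |c i| := by
        calc |c ⬝ᵥ y| ≤ ∑ i, |c i * y i| := Finset.abs_sum_le_sum_abs _ _
          _ ≤ ∑ i, |c i| := by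
            apply Finset.sum_le_sum
            intro i _
            rw [abs_mul]
            calc |c i| * |y i| ≤ |c i| * 1 :=
              mul_le_mul_of_nonneg_left (abs_le_one_of_euclNorm_le_one hy i) (abs_nonneg _)
              _ = |c i| := mul_one _
      linarith [neg_abs_le (c ⬝ᵥ y)]
    linarith [hint_nonneg y]
  have hbdd : BddBelow (f '' {y | euclNorm y ≤ 1}) := by
    refine ⟨-(∑ i, |c i|), ?_⟩
    rintro z ⟨y, hy, rfl⟩
    exact hlb y hy
  have hf0 : f 0 = 0 := by
    rw [hfy]
    have : (fun s => ((βA s - αA s) / 2 + (βB s - αB s) / 2) * |(0 : Fin r → ℝ) ⬝ᵥ xi r s|)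
        = fun _ => (0:ℝ) := by
      funext s; simp [zero_dotProduct]
    rw [this]
    simp
  have h0mem : (0 : Fin r → ℝ) ∈ {y | euclNorm y ≤ 1} := by
    simp only [Set.mem_setOf_eq, euclNorm_zero]; norm_num
  constructor
  · rw [hptil]
    calc sInf (f '' {y | euclNorm y ≤ 1}) ≤ f 0 := csInf_le hbdd ⟨0, h0mem, rfl⟩
      _ = 0 := hf0
  intro hz
  have hball : ∀ y, euclNorm y ≤ 1 → 0 ≤ f y := by
    intro y hy
    have h1 : sInf (f '' {y | euclNorm y ≤ 1}) ≤ f y := csInf_le hbdd ⟨y, hy, rfl⟩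
    rw [← hptil, hz] at h1
    exact h1
  have i0 : Fin r := ⟨0, hr⟩
  refine ⟨?_, ?_⟩
  · apply le_csInf
    · exact ⟨f (Pi.single i0 1), ⟨Pi.single i0 1, euclNorm_single i0, rfl⟩⟩
    · rintro z ⟨y, hy, rfl⟩
      exact hball y (le_of_eq hy)
  -- === intersection part ===
  -- clamping projection onto [0, t]
  set pr : ℝ → ℝ := fun s => min (max s 0) t with hpr
  have hprcont : Continuous pr := (continuous_id.max continuous_const).min continuous_const
  have hprmem : ∀ s, pr s ∈ Set.Icc (0:ℝ) t := by
    intro s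
    exact ⟨le_min (le_max_right _ _) ht.le, min_le_right _ _⟩
  have hprid : ∀ s ∈ Set.Icc (0:ℝ) t, pr s = s := by
    intro s hs
    simp only [hpr]
    rw [max_eq_left hs.1, min_eq_left hs.2]
  have hcomp : ∀ g : ℝ → ℝ, ContinuousOn g (Set.Icc 0 t) → Continuous (fun s => g (pr s)) :=
    fun g hg => hg.comp_continuous hprcont hprmem
  set m : ℝ → ℝ := fun s => (βA (pr s) - αA (pr s)) / 2 + (βB (pr s) - αB (pr s)) / 2 with hm
  have hmcont : Continuous m :=
    (((hcomp βA hβA).sub (hcomp αA hαA)).div_const 2).add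
      (((hcomp βB hβB).sub (hcomp αB hαB)).div_const 2)
  have hmnn : ∀ s, 0 ≤ m s := by
    intro s
    have h1 := hA (pr s) (hprmem s)
    have h2 := hB (pr s) (hprmem s)
    simp only [hm]
    linarith
  have hmicc : ∀ s ∈ Set.Icc (0:ℝ) t, m s = (βA s - αA s) / 2 + (βB s - αB s) / 2 := by
    intro s hs
    simp only [hm, hprid s hs]
  have hξcont : Continuous (xi r) := by
    apply continuous_pi
    intro i
    exact (continuous_pow _).div_const _
  have hdotc : ∀ q : Fin r → ℝ, Continuous fun s => q ⬝ᵥ xi r s := by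
    intro q
    have h : (fun s => q ⬝ᵥ xi r s) = fun s => ∑ i, q i * xi r s i := rfl
    rw [h]
    exact continuous_finset_sum _ fun i _ =>
      continuous_const.mul ((continuous_apply i).comp hξcont)
  have hdotq : ∀ v : Fin r → ℝ, Continuous fun q : Fin r → ℝ => q ⬝ᵥ v := by
    intro v
    have h : (fun q : Fin r → ℝ => q ⬝ᵥ v) = fun q => ∑ i, q i * v i := rfl
    rw [h]
    exact continuous_finset_sum _ fun i _ => (continuous_apply i).mul continuous_const
  have hbint : IntegrableOn (fun s => m s * ‖xi r s‖) (Set.Ioc 0 t) :=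
    (hmcont.mul hξcont.norm).integrableOn_Ioc
  have hIint : ∀ w : ℝ → ℝ, Measurable w → (∀ s ∈ Set.Icc (0:ℝ) t, |w s| ≤ m s) →
      IntervalIntegrable (fun s => w s • xi r s) volume 0 t := by
    intro w hwm hwb
    rw [intervalIntegrable_iff, Set.uIoc_of_le ht.le]
    apply Integrable.mono' hbint
    · apply Measurable.aestronglyMeasurable
      apply measurable_pi_lambda
      intro i
      exact hwm.mul ((continuous_apply i).comp hξcont).measurable
    · filter_upwards [ae_restrict_mem measurableSet_Ioc] with s hs
      have h1 : |w s| ≤ m s := hwb s ⟨hs.1.le, hs.2⟩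
      calc ‖w s • xi r s‖ = |w s| * ‖xi r s‖ := by rw [norm_smul, Real.norm_eq_abs]
        _ ≤ m s * ‖xi r s‖ := mul_le_mul_of_nonneg_right h1 (norm_nonneg _)
  -- global support inequality
  have hcongr : ∀ y' : Fin r → ℝ,
      (∫ s in (0:ℝ)..t, ((βA s - αA s) / 2 + (βB s - αB s) / 2) * |y' ⬝ᵥ xi r s|)
        = ∫ s in (0:ℝ)..t, m s * |y' ⬝ᵥ xi r s| := by
    intro y'
    apply intervalIntegral.integral_congr
    intro s hs
    rw [Set.uIcc_of_le ht.le] at hs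
    show ((βA s - αA s) / 2 + (βB s - αB s) / 2) * |y' ⬝ᵥ xi r s| = m s * |y' ⬝ᵥ xi r s|
    rw [hmicc s hs]
  have hglob : ∀ y : Fin r → ℝ, -(c ⬝ᵥ y) ≤ ∫ s in (0:ℝ)..t, m s * |y ⬝ᵥ xi r s| := by
    intro y
    by_cases hy0 : y = 0
    · subst hy0
      simp only [dotProduct_zero, zero_dotProduct, abs_zero, mul_zero, neg_zero,
        intervalIntegral.integral_zero]
      exact le_refl 0
    · have he : 0 < euclNorm y := by
        rcases (euclNorm_nonneg y).lt_or_eq with h | h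
        · exact h
        · exact absurd (euclNorm_eq_zero h.symm) hy0
      have hapos : 0 < (euclNorm y)⁻¹ := inv_pos.mpr he
      have h1 : 0 ≤ f ((euclNorm y)⁻¹ • y) := by
        apply hball
        rw [euclNorm_smul, abs_of_pos hapos, inv_mul_cancel₀ he.ne']
      rw [hfy] at h1
      have h2 : c ⬝ᵥ ((euclNorm y)⁻¹ • y) = (euclNorm y)⁻¹ * (c ⬝ᵥ y) := by
        rw [dotProduct_smul, smul_eq_mul]
      have h3 : (∫ s in (0:ℝ)..t,
            ((βA s - αA s) / 2 + (βB s - αB s) / 2) * |((euclNorm y)⁻¹ • y) ⬝ᵥ xi r s|)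
          = (euclNorm y)⁻¹ *
            ∫ s in (0:ℝ)..t, ((βA s - αA s) / 2 + (βB s - αB s) / 2) * |y ⬝ᵥ xi r s| := by
        rw [← intervalIntegral.integral_const_mul]
        apply intervalIntegral.integral_congr
        intro s _
        show ((βA s - αA s) / 2 + (βB s - αB s) / 2) * |((euclNorm y)⁻¹ • y) ⬝ᵥ xi r s|
          = (euclNorm y)⁻¹ * (((βA s - αA s) / 2 + (βB s - αB s) / 2) * |y ⬝ᵥ xi r s|)
        rw [smul_dotProduct, smul_eq_mul, abs_mul, abs_of_pos hapos]
        ring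
      rw [h2, h3] at h1
      have h4 : 0 ≤ (c ⬝ᵥ y) +
          ∫ s in (0:ℝ)..t, ((βA s - αA s) / 2 + (βB s - αB s) / 2) * |y ⬝ᵥ xi r s| := by
        by_contra hneg
        push_neg at hneg
        have h5 : (euclNorm y)⁻¹ * ((c ⬝ᵥ y) +
            ∫ s in (0:ℝ)..t, ((βA s - αA s) / 2 + (βB s - αB s) / 2) * |y ⬝ᵥ xi r s|) < 0 :=
          mul_neg_of_pos_of_neg hapos hneg
        rw [mul_add] at h5
        linarith
      rw [hcongr y] at h4
      linarith
  -- the sphere and bang-bang map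
  set Ps : Set (Fin r → ℝ) := {q | euclNorm q = 1} with hPs
  have hPscomp : IsCompact Ps := by
    have hclosed : IsClosed Ps := by
      have hcont : Continuous fun q : Fin r → ℝ => euclNorm q :=
        Real.continuous_sqrt.comp (continuous_finset_sum _ fun i _ => (continuous_apply i).pow 2)
      exact isClosed_eq hcont continuous_const
    have hsub : Ps ⊆ Metric.closedBall 0 1 := by
      intro q hq
      rw [Metric.mem_closedBall, dist_zero_right]
      rw [pi_norm_le_iff_of_nonneg (by norm_num : (0:ℝ) ≤ 1)]
      intro i
      rw [Real.norm_eq_abs]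
      exact abs_le_one_of_euclNorm_le_one (le_of_eq hq) i
    exact Metric.isCompact_of_isClosed_isBounded hclosed
      (Metric.isBounded_closedBall.subset hsub)
  set F : (Fin r → ℝ) → ℝ → (Fin r → ℝ) :=
    fun q s => (m s * Real.sign (q ⬝ᵥ xi r s)) • xi r s with hF
  have hFmeas : ∀ q, Measurable (F q) := by
    intro q
    apply measurable_pi_lambda
    intro i
    exact (hmcont.measurable.mul (measurable_rsign.comp (hdotc q).measurable)).mul
      ((continuous_apply i).comp hξcont).measurable
  have hFbd : ∀ q s, ‖F q s‖ ≤ m s * ‖xi r s‖ := by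
    intro q s
    calc ‖F q s‖ = |m s * Real.sign (q ⬝ᵥ xi r s)| * ‖xi r s‖ := by
          rw [hF, norm_smul, Real.norm_eq_abs]
      _ ≤ m s * ‖xi r s‖ := by
          apply mul_le_mul_of_nonneg_right _ (norm_nonneg _)
          rw [abs_mul, abs_of_nonneg (hmnn s)]
          calc m s * |Real.sign (q ⬝ᵥ xi r s)| ≤ m s * 1 :=
                mul_le_mul_of_nonneg_left (abs_rsign_le_one _) (hmnn s)
            _ = m s := mul_one _
  have hFint : ∀ q, IntegrableOn (F q) (Set.Ioc 0 t) := by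
    intro q
    apply Integrable.mono' hbint (hFmeas q).aestronglyMeasurable
    filter_upwards with s using hFbd q s
  set Φ : (Fin r → ℝ) → (Fin r → ℝ) := fun q => ∫ s in Set.Ioc (0:ℝ) t, F q s with hΦ
  have hΦIcc : ∀ q, Φ q = ∫ s in (0:ℝ)..t, F q s := by
    intro q
    rw [hΦ, intervalIntegral.integral_of_le ht.le]
  have hΦcont : ContinuousOn Φ Ps := by
    intro q₀ hq₀
    apply ContinuousAt.continuousWithinAt
    have hq0ne : q₀ ≠ 0 := by
      intro h
      rw [hPs] at hq₀
      rw [h] at hq₀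
      simp only [Set.mem_setOf_eq, euclNorm_zero] at hq₀
      norm_num at hq₀
    apply continuousAt_of_dominated (bound := fun s => m s * ‖xi r s‖)
    · filter_upwards with q using (hFmeas q).aestronglyMeasurable
    · filter_upwards with q
      filter_upwards with s using hFbd q s
    · exact hbint
    · have hfin : {s : ℝ | q₀ ⬝ᵥ xi r s = 0}.Finite := dot_xi_roots_finite hq0ne
      have hae : ∀ᵐ s ∂(volume.restrict (Set.Ioc (0:ℝ) t)), q₀ ⬝ᵥ xi r s ≠ 0 := by
        rw [ae_iff]
        have hset : {s : ℝ | ¬ q₀ ⬝ᵥ xi r s ≠ 0} = {s : ℝ | q₀ ⬝ᵥ xi r s = 0} := by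
          ext s; simp
        rw [hset]
        exact hfin.measure_zero _
      filter_upwards [hae] with s hs
      show ContinuousAt (fun q => (m s * Real.sign (q ⬝ᵥ xi r s)) • xi r s) q₀
      refine ContinuousAt.smul (f := fun q => m s * Real.sign (q ⬝ᵥ xi r s))
        (g := fun _ => xi r s) ?_ continuousAt_const
      apply ContinuousAt.mul continuousAt_const
      exact ContinuousAt.comp (x := q₀) (f := fun q : Fin r → ℝ => q ⬝ᵥ xi r s)
        (continuousAt_rsign hs) (hdotq (xi r s)).continuousAt
  -- the convex target set D
  set D : Set (Fin r → ℝ) := {x | ∃ w : ℝ → ℝ, Measurable w ∧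
      (∀ s ∈ Set.Icc (0:ℝ) t, |w s| ≤ m s) ∧ x = ∫ s in (0:ℝ)..t, w s • xi r s} with hD
  have hDconv : Convex ℝ D := by
    rintro x ⟨wx, hwxm, hwxb, rfl⟩ y ⟨wy, hwym, hwyb, rfl⟩ a b ha hb hab
    refine ⟨fun s => a * wx s + b * wy s,
      (measurable_const.mul hwxm).add (measurable_const.mul hwym), ?_, ?_⟩
    · intro s hs
      calc |a * wx s + b * wy s| ≤ |a * wx s| + |b * wy s| := abs_add_le _ _
        _ = a * |wx s| + b * |wy s| := by
            rw [abs_mul, abs_mul, abs_of_nonneg ha, abs_of_nonneg hb]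
        _ ≤ a * m s + b * m s := add_le_add
            (mul_le_mul_of_nonneg_left (hwxb s hs) ha)
            (mul_le_mul_of_nonneg_left (hwyb s hs) hb)
        _ = m s := by rw [← add_mul, hab, one_mul]
    · have hix := hIint wx hwxm hwxb
      have hiy := hIint wy hwym hwyb
      have h1 : (fun s => (a * wx s + b * wy s) • xi r s)
          = fun s => a • (wx s • xi r s) + b • (wy s • xi r s) := by
        funext s
        rw [add_smul, ← smul_smul, ← smul_smul]
      have hax : IntervalIntegrable (fun s => a • (wx s • xi r s)) volume 0 t := hix.smul a
      have hbx : IntervalIntegrable (fun s => b • (wy s • xi r s)) volume 0 t := hiy.smul b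
      beta_reduce
      rw [h1, intervalIntegral.integral_add hax hbx,
        intervalIntegral.integral_smul, intervalIntegral.integral_smul]
  have hΦD : ∀ q, Φ q ∈ D := by
    intro q
    refine ⟨fun s => m s * Real.sign (q ⬝ᵥ xi r s),
      hmcont.measurable.mul (measurable_rsign.comp (hdotc q).measurable), ?_, hΦIcc q⟩
    intro s _
    rw [abs_mul, abs_of_nonneg (hmnn s)]
    calc m s * |Real.sign (q ⬝ᵥ xi r s)| ≤ m s * 1 :=
          mul_le_mul_of_nonneg_left (abs_rsign_le_one _) (hmnn s)
      _ = m s := mul_one _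
  have hKD : convexHull ℝ (Φ '' Ps) ⊆ D :=
    convexHull_min (by rintro _ ⟨q, hq, rfl⟩; exact hΦD q) hDconv
  have hKcomp : IsCompact (convexHull ℝ (Φ '' Ps)) :=
    myIsCompact_convexHull (hPscomp.image_of_continuousOn hΦcont)
      ⟨Φ (Pi.single i0 1), Set.mem_image_of_mem Φ (euclNorm_single i0)⟩
  -- separation: -c belongs to the convex hull
  have hcK : -c ∈ convexHull ℝ (Φ '' Ps) := by
    by_contra hnc
    obtain ⟨L, u, hLs, hLc⟩ := geometric_hahn_banach_closed_point
      (convex_convexHull ℝ _) hKcomp.isClosed hnc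
    set y : Fin r → ℝ := fun i => L (Pi.single i 1) with hy
    have hLdot : ∀ v : Fin r → ℝ, L v = y ⬝ᵥ v := by
      intro v
      have hv : v = ∑ i, v i • (Pi.single i 1 : Fin r → ℝ) := by
        funext j
        rw [Finset.sum_apply]
        rw [Finset.sum_eq_single j]
        · simp
        · intro i _ hij
          simp [Pi.single_apply, Ne.symm hij]
        · intro h; exact absurd (Finset.mem_univ j) h
      calc L v = L (∑ i, v i • (Pi.single i 1 : Fin r → ℝ)) := by rw [← hv]
        _ = ∑ i, v i * L (Pi.single i 1) := by
            rw [map_sum]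
            exact Finset.sum_congr rfl fun i _ => by rw [ContinuousLinearMap.map_smul, smul_eq_mul]
        _ = y ⬝ᵥ v := Finset.sum_congr rfl fun i _ => mul_comm _ _
    by_cases hy0 : y = 0
    · have h1 : L (Φ (Pi.single i0 1)) < u :=
        hLs _ (subset_convexHull ℝ _ (Set.mem_image_of_mem Φ (euclNorm_single i0)))
      rw [hLdot, hy0, zero_dotProduct] at h1
      have h2 := hLc
      rw [hLdot, hy0, zero_dotProduct] at h2
      linarith
    · have he : 0 < euclNorm y := by
        rcases (euclNorm_nonneg y).lt_or_eq with h | h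
        · exact h
        · exact absurd (euclNorm_eq_zero h.symm) hy0
      have hapos : 0 < (euclNorm y)⁻¹ := inv_pos.mpr he
      set q : Fin r → ℝ := (euclNorm y)⁻¹ • y with hq
      have hqPs : q ∈ Ps := by
        rw [hPs]
        show euclNorm q = 1
        rw [hq, euclNorm_smul, abs_of_pos hapos, inv_mul_cancel₀ he.ne']
      have hLF : ∀ s, L (F q s) = m s * |y ⬝ᵥ xi r s| := by
        intro s
        have h1 : L (F q s) = (m s * Real.sign (q ⬝ᵥ xi r s)) * (y ⬝ᵥ xi r s) := by
          rw [hF]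
          rw [ContinuousLinearMap.map_smul, smul_eq_mul, hLdot]
        have hsgn : Real.sign (q ⬝ᵥ xi r s) = Real.sign (y ⬝ᵥ xi r s) := by
          rw [hq, smul_dotProduct, smul_eq_mul]
          exact rsign_mul_pos hapos
        rw [h1, hsgn, mul_assoc, rsign_mul_self]
      have hLΦ : L (Φ q) = ∫ s in Set.Ioc (0:ℝ) t, m s * |y ⬝ᵥ xi r s| := by
        rw [hΦ, ← ContinuousLinearMap.integral_comp_comm L (hFint q)]
        simp only [hLF]
      have h2 : L (Φ q) < u := hLs _ (subset_convexHull ℝ _ ⟨q, hqPs, rfl⟩)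
      have h3 : L (-c) = -(c ⬝ᵥ y) := by
        rw [hLdot, dotProduct_neg, dotProduct_comm]
      have h4 := hglob y
      rw [intervalIntegral.integral_of_le ht.le] at h4
      rw [hLΦ] at h2
      rw [h3] at hLc
      linarith
  -- obtain the combined control
  obtain ⟨w, hwm, hwb, hwrep⟩ := hKD hcK
    -- build the two controls
  set ρA : ℝ → ℝ := fun s => if m s = 0 then 0 else ((βA (pr s) - αA (pr s)) / 2) / m s with hρA
  set ρB : ℝ → ℝ := fun s => if m s = 0 then 0 else ((βB (pr s) - αB (pr s)) / 2) / m s with hρB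
  have hmzero : MeasurableSet {s : ℝ | m s = 0} :=
    (isClosed_eq hmcont continuous_const).measurableSet
  have hρAm : Measurable ρA :=
    Measurable.ite hmzero measurable_const
      ((((hcomp βA hβA).sub (hcomp αA hαA)).div_const 2).measurable.div hmcont.measurable)
  have hρBm : Measurable ρB :=
    Measurable.ite hmzero measurable_const
      ((((hcomp βB hβB).sub (hcomp αB hαB)).div_const 2).measurable.div hmcont.measurable)
  set vA : ℝ → ℝ := fun s => w s * ρA s with hvA
  set vB : ℝ → ℝ := fun s => -(w s * ρB s) with hvB
  have hvAm : Measurable vA := hwm.mul hρAm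
  have hvBm : Measurable vB := (hwm.mul hρBm).neg
  have hvAb : ∀ s ∈ Set.Icc (0:ℝ) t, |vA s| ≤ (βA s - αA s) / 2 := by
    intro s hs
    have hμA : 0 ≤ (βA s - αA s) / 2 := by have := hA s hs; linarith
    by_cases h0 : m s = 0
    · have hz' : ρA s = 0 := by simp [hρA, h0]
      show |w s * ρA s| ≤ _
      rw [hz', mul_zero, abs_zero]
      exact hμA
    · have hmpos : 0 < m s := lt_of_le_of_ne (hmnn s) (Ne.symm h0)
      have hρval : ρA s = ((βA s - αA s) / 2) / m s := by
        simp only [hρA, if_neg h0, hprid s hs]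
      show |w s * ρA s| ≤ _
      rw [abs_mul, hρval, abs_of_nonneg (div_nonneg hμA hmpos.le)]
      calc |w s| * ((βA s - αA s) / 2 / m s)
          ≤ m s * ((βA s - αA s) / 2 / m s) :=
            mul_le_mul_of_nonneg_right (hwb s hs) (div_nonneg hμA hmpos.le)
        _ = (βA s - αA s) / 2 := by field_simp
  have hvBb : ∀ s ∈ Set.Icc (0:ℝ) t, |vB s| ≤ (βB s - αB s) / 2 := by
    intro s hs
    have hμB : 0 ≤ (βB s - αB s) / 2 := by have := hB s hs; linarith
    by_cases h0 : m s = 0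
    · have hz' : ρB s = 0 := by simp [hρB, h0]
      show |-(w s * ρB s)| ≤ _
      rw [hz', mul_zero, neg_zero, abs_zero]
      exact hμB
    · have hmpos : 0 < m s := lt_of_le_of_ne (hmnn s) (Ne.symm h0)
      have hρval : ρB s = ((βB s - αB s) / 2) / m s := by
        simp only [hρB, if_neg h0, hprid s hs]
      show |-(w s * ρB s)| ≤ _
      rw [abs_neg, abs_mul, hρval, abs_of_nonneg (div_nonneg hμB hmpos.le)]
      calc |w s| * ((βB s - αB s) / 2 / m s)
          ≤ m s * ((βB s - αB s) / 2 / m s) :=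
            mul_le_mul_of_nonneg_right (hwb s hs) (div_nonneg hμB hmpos.le)
        _ = (βB s - αB s) / 2 := by field_simp
  set uA : ℝ → ℝ := fun s => (βA (pr s) + αA (pr s)) / 2 + vA s with huA
  set uB : ℝ → ℝ := fun s => (βB (pr s) + αB (pr s)) / 2 + vB s with huB
  have hnAc : Continuous fun s => (βA (pr s) + αA (pr s)) / 2 :=
    ((hcomp βA hβA).add (hcomp αA hαA)).div_const 2
  have hnBc : Continuous fun s => (βB (pr s) + αB (pr s)) / 2 :=
    ((hcomp βB hβB).add (hcomp αB hαB)).div_const 2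
  have huAm : Measurable uA := hnAc.measurable.add hvAm
  have huBm : Measurable uB := hnBc.measurable.add hvBm
  have huAbox : ∀ s ∈ Set.Icc (0:ℝ) t, uA s ∈ Set.Icc (αA s) (βA s) := by
    intro s hs
    have h2 := abs_le.mp (hvAb s hs)
    show (βA (pr s) + αA (pr s)) / 2 + vA s ∈ Set.Icc (αA s) (βA s)
    rw [hprid s hs]
    constructor
    · linarith [h2.1]
    · linarith [h2.2]
  have huBbox : ∀ s ∈ Set.Icc (0:ℝ) t, uB s ∈ Set.Icc (αB s) (βB s) := by
    intro s hs
    have h2 := abs_le.mp (hvBb s hs)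
    show (βB (pr s) + αB (pr s)) / 2 + vB s ∈ Set.Icc (αB s) (βB s)
    rw [hprid s hs]
    constructor
    · linarith [h2.1]
    · linarith [h2.2]
  -- integrability
  have hvAI : IntervalIntegrable (fun s => vA s • xi r s) volume 0 t := by
    apply hIint vA hvAm
    intro s hs
    have h1 := hvAb s hs
    have hμB : 0 ≤ (βB s - αB s) / 2 := by have := hB s hs; linarith
    rw [hmicc s hs]
    linarith
  have hvBI : IntervalIntegrable (fun s => vB s • xi r s) volume 0 t := by
    apply hIint vB hvBm
    intro s hs
    have h1 := hvBb s hs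
    have hμA : 0 ≤ (βA s - αA s) / 2 := by have := hA s hs; linarith
    rw [hmicc s hs]
    linarith
  have hnAI : IntervalIntegrable (fun s => ((βA (pr s) + αA (pr s)) / 2) • xi r s) volume 0 t :=
    (hnAc.smul hξcont).intervalIntegrable 0 t
  have hnBI : IntervalIntegrable (fun s => ((βB (pr s) + αB (pr s)) / 2) • xi r s) volume 0 t :=
    (hnBc.smul hξcont).intervalIntegrable 0 t
  -- splitting the control integrals
  have hsplitA : (∫ s in (0:ℝ)..t, uA s • xi r s)
      = (∫ s in (0:ℝ)..t, ((βA (pr s) + αA (pr s)) / 2) • xi r s)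
        + ∫ s in (0:ℝ)..t, vA s • xi r s := by
    rw [← intervalIntegral.integral_add hnAI hvAI]
    apply intervalIntegral.integral_congr
    intro s _
    show uA s • xi r s = ((βA (pr s) + αA (pr s)) / 2) • xi r s + vA s • xi r s
    rw [huA]
    beta_reduce
    rw [add_smul]
  have hsplitB : (∫ s in (0:ℝ)..t, uB s • xi r s)
      = (∫ s in (0:ℝ)..t, ((βB (pr s) + αB (pr s)) / 2) • xi r s)
        + ∫ s in (0:ℝ)..t, vB s • xi r s := by
    rw [← intervalIntegral.integral_add hnBI hvBI]
    apply intervalIntegral.integral_congr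
    intro s _
    show uB s • xi r s = ((βB (pr s) + αB (pr s)) / 2) • xi r s + vB s • xi r s
    rw [huB]
    beta_reduce
    rw [add_smul]
  -- the nominal part reproduces c
  have hnu : (∫ s in (0:ℝ)..t, ((βA (pr s) + αA (pr s)) / 2) • xi r s)
      - (∫ s in (0:ℝ)..t, ((βB (pr s) + αB (pr s)) / 2) • xi r s)
      = c - NormedSpace.exp (t • shiftMat r) *ᵥ (x0A - x0B) := by
    rw [← intervalIntegral.integral_sub hnAI hnBI]
    have hcongr2 : (∫ s in (0:ℝ)..t,
          (((βA (pr s) + αA (pr s)) / 2) • xi r s - ((βB (pr s) + αB (pr s)) / 2) • xi r s))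
        = ∫ s in (0:ℝ)..t, ((βA s + αA s) / 2 - (βB s + αB s) / 2) • xi r s := by
      apply intervalIntegral.integral_congr
      intro s hs
      rw [Set.uIcc_of_le ht.le] at hs
      show ((βA (pr s) + αA (pr s)) / 2) • xi r s - ((βB (pr s) + αB (pr s)) / 2) • xi r s
        = ((βA s + αA s) / 2 - (βB s + αB s) / 2) • xi r s
      rw [hprid s hs, sub_smul]
    rw [hcongr2, hc]
    abel
  -- the perturbation part reproduces -c
  have hvv : (∫ s in (0:ℝ)..t, vA s • xi r s) - (∫ s in (0:ℝ)..t, vB s • xi r s) = -c := by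
    rw [← intervalIntegral.integral_sub hvAI hvBI]
    have heq : Set.EqOn (fun s => vA s • xi r s - vB s • xi r s)
        (fun s => w s • xi r s) (Set.uIcc 0 t) := by
      intro s hs
      rw [Set.uIcc_of_le ht.le] at hs
      show vA s • xi r s - vB s • xi r s = w s • xi r s
      rw [← sub_smul]
      congr 1
      by_cases h0 : m s = 0
      · have hw0 : w s = 0 := by
          have h1 := hwb s hs
          rw [h0] at h1
          have h2 := abs_nonneg (w s)
          have : |w s| = 0 := le_antisymm h1 h2
          exact abs_eq_zero.mp this
        show w s * ρA s - -(w s * ρB s) = w s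
        rw [hw0]
        ring
      · have hsum : ρA s + ρB s = 1 := by
          have hmpos : 0 < m s := lt_of_le_of_ne (hmnn s) (Ne.symm h0)
          have hρvalA : ρA s = ((βA s - αA s) / 2) / m s := by
            simp only [hρA, if_neg h0, hprid s hs]
          have hρvalB : ρB s = ((βB s - αB s) / 2) / m s := by
            simp only [hρB, if_neg h0, hprid s hs]
          rw [hρvalA, hρvalB, ← add_div, ← hmicc s hs, div_self h0]
        show w s * ρA s - -(w s * ρB s) = w s
        have : w s * ρA s - -(w s * ρB s) = w s * (ρA s + ρB s) := by ring
        rw [this, hsum, mul_one]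
    rw [intervalIntegral.integral_congr heq]
    exact hwrep.symm
  -- assemble
  have hms : NormedSpace.exp (t • shiftMat r) *ᵥ (x0A - x0B)
      = NormedSpace.exp (t • shiftMat r) *ᵥ x0A - NormedSpace.exp (t • shiftMat r) *ᵥ x0B :=
    Matrix.mulVec_sub _ _ _
  have hfinal : NormedSpace.exp (t • shiftMat r) *ᵥ x0A + (∫ s in (0:ℝ)..t, uA s • xi r s)
      = NormedSpace.exp (t • shiftMat r) *ᵥ x0B + ∫ s in (0:ℝ)..t, uB s • xi r s := by
    rw [hsplitA, hsplitB]
    rw [hms] at hnu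
    linear_combination hnu + hvv
  exact ⟨NormedSpace.exp (t • shiftMat r) *ᵥ x0A + ∫ s in (0:ℝ)..t, uA s • xi r s,
    by rw [hXA]; exact ⟨uA, huAm, huAbox, rfl⟩,
    by rw [hXB]; exact ⟨uB, huBm, huBbox, hfinal⟩⟩
end
end
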